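/- arXiv:1210.6747 — 15 statements merged into one kernel-verified Lean document; each statement's English description precedes it below -/
import Mathlib

section
/- If f : X → Y is a coarse equivalence between metric spaces X and Y, then for every n ∈ ℕ, X has asymptotic dimension at most n if and only if Y has asymptotic dimension at most n. -/
open Metric Set

/-- A subset `L` of a metric space is *large* if some `r`-neighborhood of `L` is the whole space. -/
def IsLarge {X : Type*} [MetricSpace X] (L : Set X) : Prop :=
  ∃ r > (0 : ℝ), ∀ x : X, ∃ y ∈ L, dist x y < r

/-- A subset `A` of a metric space is *small* if for every large set `L` the set `L \\ A` is large. -/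
def IsSmall {X : Type*} [MetricSpace X] (A : Set X) : Prop :=
  ∀ L : Set X, IsLarge L → IsLarge (L \ A)

/-- `AsdimLE X n` means the asymptotic dimension of `X` is at most `n`: for every `r > 0`
there are `D > 0` and a cover of `X` by sets of diameter at most `D` such that every open
`r`-ball meets at most `n + 1` members of the cover. -/
def AsdimLE (X : Type*) [MetricSpace X] (n : ℕ) : Prop :=
  ∀ r > (0 : ℝ), ∃ D > (0 : ℝ), ∃ U : Set (Set X),
    ⋃₀ U = univ ∧
    (∀ u ∈ U, EMetric.diam u ≤ ENNReal.ofReal D) ∧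
    ∀ x : X, {u ∈ U | (u ∩ Metric.ball x r).Nonempty}.Finite ∧
      {u ∈ U | (u ∩ Metric.ball x r).Nonempty}.ncard ≤ n + 1

/-- A map between metric spaces is *coarse* if it maps pairs at bounded distance to
pairs at bounded distance. -/
def IsCoarseMap {X Y : Type*} [MetricSpace X] [MetricSpace Y] (f : X → Y) : Prop :=
  ∀ R > (0 : ℝ), ∃ S > (0 : ℝ), ∀ x x' : X, dist x x' ≤ R → dist (f x) (f x') ≤ S

/-- A coarse map `f : X → Y` is a *coarse equivalence* if it has a coarse inverse up to
uniformly bounded distance. -/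
def IsCoarseEquiv {X Y : Type*} [MetricSpace X] [MetricSpace Y] (f : X → Y) : Prop :=
  IsCoarseMap f ∧ ∃ g : Y → X, IsCoarseMap g ∧
    (∃ C : ℝ, ∀ x : X, dist x (g (f x)) ≤ C) ∧
    (∃ C : ℝ, ∀ y : Y, dist y (f (g y)) ≤ C)

lemma asdim_aux {X Y : Type*} [MetricSpace X] [MetricSpace Y]
    (f : X → Y) (g : Y → X) (hf : IsCoarseMap f) (hg : IsCoarseMap g)
    (C : ℝ) (hC : ∀ x : X, dist x (g (f x)) ≤ C) {n : ℕ}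
    (h : AsdimLE Y n) : AsdimLE X n := by
  intro r hr
  obtain ⟨S, hS, hfS⟩ := hf r hr
  obtain ⟨D', hD', V, hVcov, hVdiam, hVmult⟩ := h (S + 1) (by linarith)
  obtain ⟨T, hT, hgT⟩ := hg D' hD'
  refine ⟨max (2 * C + T) 1, lt_of_lt_of_le one_pos (le_max_right _ _),
    (fun v => f ⁻¹' v) '' V, ?_, ?_, ?_⟩
  · ext x
    simp only [mem_sUnion, mem_image, mem_univ, iff_true]
    have : f x ∈ ⋃₀ V := by rw [hVcov]; trivial
    obtain ⟨v, hv, hfx⟩ := this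
    exact ⟨f ⁻¹' v, ⟨v, hv, rfl⟩, hfx⟩
  · rintro u ⟨v, hv, rfl⟩
    apply EMetric.diam_le
    intro a ha b hb
    have hd : dist (f a) (f b) ≤ D' := by
      have h1 := EMetric.edist_le_diam_of_mem (show f a ∈ v from ha) (show f b ∈ v from hb)
      have h2 := le_trans h1 (hVdiam v hv)
      rw [edist_dist] at h2
      exact (ENNReal.ofReal_le_ofReal_iff hD'.le).mp h2
    have hgd : dist (g (f a)) (g (f b)) ≤ T := hgT _ _ hd
    have : dist a b ≤ 2 * C + T :=
      calc dist a b ≤ dist a (g (f a)) + dist (g (f a)) (g (f b)) + dist (g (f b)) b :=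
            dist_triangle4 _ _ _ _
        _ ≤ C + T + C := by
            have := hC a; have := hC b
            have hb' : dist (g (f b)) b = dist b (g (f b)) := dist_comm _ _
            linarith [hC a, hC b, hgd, hb' ▸ hC b]
        _ = 2 * C + T := by ring
    rw [edist_dist]
    exact ENNReal.ofReal_le_ofReal (this.trans (le_max_left _ _))
  · intro x
    have hsub : {u ∈ (fun v => f ⁻¹' v) '' V | (u ∩ Metric.ball x r).Nonempty} ⊆
        (fun v => f ⁻¹' v) '' {v ∈ V | (v ∩ Metric.ball (f x) (S + 1)).Nonempty} := by
      rintro u ⟨⟨v, hv, rfl⟩, x', hx'v, hx'b⟩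
      refine ⟨v, ⟨hv, f x', hx'v, ?_⟩, rfl⟩
      have : dist (f x') (f x) ≤ S := hfS _ _ (le_of_lt (mem_ball.mp hx'b))
      exact mem_ball.mpr (by linarith)
    obtain ⟨hfin, hcard⟩ := hVmult (f x)
    refine ⟨(hfin.image _).subset hsub, ?_⟩
    calc {u ∈ (fun v => f ⁻¹' v) '' V | (u ∩ Metric.ball x r).Nonempty}.ncard
        ≤ ((fun v => f ⁻¹' v) '' {v ∈ V | (v ∩ Metric.ball (f x) (S + 1)).Nonempty}).ncard :=
          Set.ncard_le_ncard hsub (hfin.image _)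
      _ ≤ {v ∈ V | (v ∩ Metric.ball (f x) (S + 1)).Nonempty}.ncard :=
          Set.ncard_image_le hfin
      _ ≤ n + 1 := hcard

theorem asdim_invariant_of_coarseEquiv {X Y : Type*} [MetricSpace X] [MetricSpace Y]
    (f : X → Y) (hf : IsCoarseEquiv f) (n : ℕ) :
    AsdimLE X n ↔ AsdimLE Y n := by
  obtain ⟨hfc, g, hgc, ⟨C1, hC1⟩, ⟨C2, hC2⟩⟩ := hf
  exact ⟨fun h => asdim_aux g f hgc hfc C2 hC2 h,
    fun h => asdim_aux f g hfc hgc C1 hC1 h⟩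
end

section
/- Let X and Y be coarsely equivalent metric spaces. Then the following are equivalent: (a) for every subset A ⊆ X, A is small if and only if there exists n ∈ ℕ with asdim(A) ≤ n and not asdim(X) ≤ n; (b) for every subset B ⊆ Y, B is small if and only if there exists n ∈ ℕ with asdim(B) ≤ n and not asdim(Y) ≤ n. -/
open Metric Set

def CEPair {X Y : Type*} [MetricSpace X] [MetricSpace Y] (f : X → Y) (g : Y → X) : Prop :=
  IsCoarseMap f ∧ IsCoarseMap g ∧
    (∃ C : ℝ, ∀ x : X, dist x (g (f x)) ≤ C) ∧
    (∃ C : ℝ, ∀ y : Y, dist y (f (g y)) ≤ C)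

lemma cepair_symm {X Y : Type*} [MetricSpace X] [MetricSpace Y] {f : X → Y} {g : Y → X}
    (h : CEPair f g) : CEPair g f := ⟨h.2.1, h.1, h.2.2.2, h.2.2.1⟩

lemma isLarge_mono {X : Type*} [MetricSpace X] {L M : Set X} (hLM : L ⊆ M) (hL : IsLarge L) :
    IsLarge M := by
  obtain ⟨r, hr, h⟩ := hL
  exact ⟨r, hr, fun x => (h x).imp fun y ⟨hy, hd⟩ => ⟨hLM hy, hd⟩⟩

lemma isSmall_mono {X : Type*} [MetricSpace X] {A B : Set X} (hAB : A ⊆ B) (hB : IsSmall B) :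
    IsSmall A := fun L hL => isLarge_mono (diff_subset_diff_right hAB) (hB L hL)

lemma isSmall_enlarge {X : Type*} [MetricSpace X] {A : Set X} (hA : IsSmall A) {r : ℝ}
    (hr : 0 ≤ r) : IsSmall {x | ∃ a ∈ A, dist x a ≤ r} := by
  intro L hL
  obtain ⟨s, hs, hLs⟩ := hL
  set N : Set X := {x | ∃ a ∈ A, dist x a ≤ r} with hN
  have hM : IsLarge ((L \ N) ∪ A) := by
    refine ⟨s + r + 1, by linarith, fun x => ?_⟩
    obtain ⟨l, hl, hdl⟩ := hLs x
    by_cases hlN : l ∈ N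
    · obtain ⟨a, ha, har⟩ := hlN
      exact ⟨a, Or.inr ha, by
        have := dist_triangle x l a
        linarith⟩
    · exact ⟨l, Or.inl ⟨hl, hlN⟩, by linarith⟩
  have := hA _ hM
  refine isLarge_mono ?_ this
  rintro x ⟨hx1, hx2⟩
  rcases hx1 with h | h
  · exact h
  · exact absurd h hx2

lemma image_large {X Y : Type*} [MetricSpace X] [MetricSpace Y] {f : X → Y} {g : Y → X}
    (ce : CEPair f g) {L : Set X} (hL : IsLarge L) : IsLarge (f '' L) := by
  obtain ⟨s, hs, hLs⟩ := hL
  obtain ⟨S, hS0, hS⟩ := ce.1 s hs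
  obtain ⟨C, hC⟩ := ce.2.2.2
  refine ⟨max C 0 + S + 1, by positivity, fun y => ?_⟩
  obtain ⟨l, hl, hdl⟩ := hLs (g y)
  refine ⟨f l, mem_image_of_mem f hl, ?_⟩
  have h1 : dist y (f (g y)) ≤ max C 0 := le_trans (hC y) (le_max_left _ _)
  have h2 : dist (f (g y)) (f l) ≤ S := hS _ _ hdl.le
  have := dist_triangle y (f (g y)) (f l)
  linarith

lemma small_image_rev {X Y : Type*} [MetricSpace X] [MetricSpace Y] {f : X → Y} {g : Y → X}
    (ce : CEPair f g) {A : Set X} (hB : IsSmall (f '' A)) : IsSmall A := by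
  intro L hL
  have hFL : IsLarge (f '' L \ f '' A) := hB _ (image_large ce hL)
  obtain ⟨t, ht, hT⟩ := hFL
  obtain ⟨Sg, hSg0, hSg⟩ := ce.2.1 t ht
  obtain ⟨C, hC⟩ := ce.2.2.1
  refine ⟨2 * max C 0 + Sg + 1, by positivity, fun x => ?_⟩
  obtain ⟨y, ⟨⟨l, hlL, rfl⟩, hyA⟩, hdist⟩ := hT (f x)
  have hlA : l ∉ A := fun h => hyA (mem_image_of_mem f h)
  refine ⟨l, ⟨hlL, hlA⟩, ?_⟩
  have h1 : dist x (g (f x)) ≤ max C 0 := le_trans (hC x) (le_max_left _ _)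
  have h2 : dist (g (f x)) (g (f l)) ≤ Sg := hSg _ _ hdist.le
  have h3 : dist (g (f l)) l ≤ max C 0 := by
    rw [dist_comm]; exact le_trans (hC l) (le_max_left _ _)
  have t1 := dist_triangle x (g (f x)) l
  have t2 := dist_triangle (g (f x)) (g (f l)) l
  linarith

lemma isSmall_image_fwd {X Y : Type*} [MetricSpace X] [MetricSpace Y] {f : X → Y} {g : Y → X}
    (ce : CEPair f g) {A : Set X} (hA : IsSmall A) : IsSmall (f '' A) := by
  obtain ⟨C, hC⟩ := ce.2.2.1
  have hsub : g '' (f '' A) ⊆ {x | ∃ a ∈ A, dist x a ≤ max C 0} := by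
    rintro _ ⟨_, ⟨a, ha, rfl⟩, rfl⟩
    exact ⟨a, ha, by rw [dist_comm]; exact le_trans (hC a) (le_max_left _ _)⟩
  have h1 : IsSmall (g '' (f '' A)) :=
    isSmall_mono hsub (isSmall_enlarge hA (le_max_right _ _))
  exact small_image_rev (cepair_symm ce) h1

lemma asdim_pullback {X Y : Type*} [MetricSpace X] [MetricSpace Y] {f : X → Y} {g : Y → X}
    (ce : CEPair f g) {n : ℕ} (hY : AsdimLE Y n) : AsdimLE X n := by
  intro r hr
  obtain ⟨Sf, hSf0, hSf⟩ := ce.1 r hr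
  obtain ⟨D, hD, U, hcov, hdiam, hball⟩ := hY (Sf + 1) (by linarith)
  obtain ⟨Sg, hSg0, hSg⟩ := ce.2.1 D hD
  obtain ⟨C, hC⟩ := ce.2.2.1
  refine ⟨2 * max C 0 + Sg, by positivity, (fun u => f ⁻¹' u) '' U, ?_, ?_, ?_⟩
  · apply eq_univ_iff_forall.mpr
    intro x
    have hx : f x ∈ ⋃₀ U := by rw [hcov]; trivial
    obtain ⟨u, hu, hxu⟩ := hx
    exact ⟨f ⁻¹' u, ⟨u, hu, rfl⟩, hxu⟩
  · rintro _ ⟨u, hu, rfl⟩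
    apply EMetric.diam_le
    intro x hx y hy
    have hdxy : dist (f x) (f y) ≤ D := by
      have h1 : edist (f x) (f y) ≤ ENNReal.ofReal D :=
        le_trans (EMetric.edist_le_diam_of_mem hx hy) (hdiam u hu)
      rw [edist_dist] at h1
      exact (ENNReal.ofReal_le_ofReal_iff hD.le).mp h1
    have h2 : dist (g (f x)) (g (f y)) ≤ Sg := hSg _ _ hdxy
    have h3 : dist x (g (f x)) ≤ max C 0 := le_trans (hC x) (le_max_left _ _)
    have h4 : dist (g (f y)) y ≤ max C 0 := by
      rw [dist_comm]; exact le_trans (hC y) (le_max_left _ _)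
    have t1 := dist_triangle x (g (f x)) y
    have t2 := dist_triangle (g (f x)) (g (f y)) y
    rw [edist_dist]
    apply ENNReal.ofReal_le_ofReal
    linarith
  · intro x
    have hsub : {v ∈ (fun u => f ⁻¹' u) '' U | (v ∩ Metric.ball x r).Nonempty} ⊆
        (fun u => f ⁻¹' u) '' {u ∈ U | (u ∩ Metric.ball (f x) (Sf + 1)).Nonempty} := by
      rintro v ⟨⟨u, hu, rfl⟩, z, hz1, hz2⟩
      refine ⟨u, ⟨hu, ⟨f z, hz1, ?_⟩⟩, rfl⟩
      have : dist (f z) (f x) ≤ Sf := hSf _ _ (mem_ball.mp hz2).le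
      exact mem_ball.mpr (by linarith)
    obtain ⟨hfin, hcard⟩ := hball (f x)
    refine ⟨(hfin.image _).subset hsub, ?_⟩
    calc {v ∈ (fun u => f ⁻¹' u) '' U | (v ∩ Metric.ball x r).Nonempty}.ncard
        ≤ ((fun u => f ⁻¹' u) '' {u ∈ U | (u ∩ Metric.ball (f x) (Sf + 1)).Nonempty}).ncard :=
          Set.ncard_le_ncard hsub (hfin.image _)
      _ ≤ {u ∈ U | (u ∩ Metric.ball (f x) (Sf + 1)).Nonempty}.ncard := Set.ncard_image_le hfin
      _ ≤ n + 1 := hcard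

lemma asdim_image_iff {X Y : Type*} [MetricSpace X] [MetricSpace Y] {f : X → Y} {g : Y → X}
    (ce : CEPair f g) (A : Set X) {n : ℕ} : AsdimLE ↥A n ↔ AsdimLE ↥(f '' A) n := by
  obtain ⟨C, hC⟩ := ce.2.2.1
  set f' : ↥A → ↥(f '' A) := fun a => ⟨f a, mem_image_of_mem f a.2⟩ with hf'
  have hspec : ∀ y : ↥(f '' A), ∃ a : ↥A, f ↑a = ↑y := by
    rintro ⟨y, a, ha, rfl⟩
    exact ⟨⟨a, ha⟩, rfl⟩
  choose g' hg' using hspec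
  have hce : CEPair f' g' := by
    refine ⟨?_, ?_, ?_, ?_⟩
    · intro R hR
      obtain ⟨S, hS0, hS⟩ := ce.1 R hR
      refine ⟨S, hS0, fun a a' h => ?_⟩
      rw [Subtype.dist_eq] at h ⊢
      exact hS _ _ h
    · intro R hR
      obtain ⟨Sg, hSg0, hSg⟩ := ce.2.1 R hR
      refine ⟨2 * max C 0 + Sg, by positivity, fun y y' h => ?_⟩
      rw [Subtype.dist_eq] at h ⊢
      have e1 : f ↑(g' y) = ↑y := hg' y
      have e2 : f ↑(g' y') = ↑y' := hg' y'
      have h1 : dist (↑(g' y) : X) (g ↑y) ≤ max C 0 := by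
        rw [← e1]; exact le_trans (hC _) (le_max_left _ _)
      have h2 : dist (g ↑y) (g ↑y') ≤ Sg := hSg _ _ h
      have h3 : dist (g ↑y') (↑(g' y') : X) ≤ max C 0 := by
        rw [dist_comm, ← e2]; exact le_trans (hC _) (le_max_left _ _)
      have t1 := dist_triangle (↑(g' y) : X) (g ↑y) ↑(g' y')
      have t2 := dist_triangle (g ↑y) (g ↑y') (↑(g' y') : X)
      linarith
    · refine ⟨2 * max C 0, fun a => ?_⟩
      rw [Subtype.dist_eq]
      have e1 : f ↑(g' (f' a)) = f ↑a := hg' (f' a)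
      have h1 : dist (↑a : X) (g (f ↑a)) ≤ max C 0 := le_trans (hC _) (le_max_left _ _)
      have h2 : dist (g (f ↑a)) (↑(g' (f' a)) : X) ≤ max C 0 := by
        rw [dist_comm, ← e1]; exact le_trans (hC _) (le_max_left _ _)
      have t1 := dist_triangle (↑a : X) (g (f ↑a)) ↑(g' (f' a))
      linarith
    · refine ⟨0, fun y => ?_⟩
      rw [Subtype.dist_eq]
      have e1 : (↑(f' (g' y)) : Y) = f ↑(g' y) := rfl
      rw [e1, hg' y, dist_self]
  exact ⟨asdim_pullback (cepair_symm hce), asdim_pullback hce⟩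

lemma transfer {X Y : Type*} [MetricSpace X] [MetricSpace Y] {f : X → Y} {g : Y → X}
    (ce : CEPair f g)
    (hY : ∀ B : Set Y, IsSmall B ↔ ∃ n : ℕ, AsdimLE ↥B n ∧ ¬ AsdimLE Y n) :
    ∀ A : Set X, IsSmall A ↔ ∃ n : ℕ, AsdimLE ↥A n ∧ ¬ AsdimLE X n := by
  intro A
  have h1 : IsSmall A ↔ IsSmall (f '' A) :=
    ⟨fun h => isSmall_image_fwd ce h, fun h => small_image_rev ce h⟩
  rw [h1, hY (f '' A)]
  exact exists_congr fun n => and_congr (asdim_image_iff ce A).symm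
    (not_congr ⟨fun h => asdim_pullback ce h, fun h => asdim_pullback (cepair_symm ce) h⟩)

theorem small_eq_asdim_lt_invariant_of_coarseEquiv {X Y : Type*} [MetricSpace X] [MetricSpace Y]
    (f : X → Y) (hf : IsCoarseEquiv f) :
    (∀ A : Set X, IsSmall A ↔ ∃ n : ℕ, AsdimLE ↥A n ∧ ¬ AsdimLE X n) ↔
      (∀ B : Set Y, IsSmall B ↔ ∃ n : ℕ, AsdimLE ↥B n ∧ ¬ AsdimLE Y n) := by
  have hf' : IsCoarseMap f ∧ ∃ g : Y → X, IsCoarseMap g ∧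
      (∃ C : ℝ, ∀ x : X, dist x (g (f x)) ≤ C) ∧
      (∃ C : ℝ, ∀ y : Y, dist y (f (g y)) ≤ C) := hf
  obtain ⟨hfc, g, hgc, hC1, hC2⟩ := hf'
  have ce : CEPair f g := ⟨hfc, hgc, hC1, hC2⟩
  exact ⟨transfer (cepair_symm ce), transfer ce⟩
end

section
/- Let G be a group equipped with a proper left-invariant metric. If a subset A ⊆ G satisfies asdim(A) < asdim(G) (i.e. there exists n ∈ ℕ with asdim(A) ≤ n and not asdim(G) ≤ n), then A is small in G. -/
open Metric Set

/-- If every finite subset of `T` has at most `n` elements, then `T` is finite with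
`ncard` at most `n`. -/
lemma aux_finite_card {α : Type*} {T : Set α} {n : ℕ}
    (h : ∀ s ⊆ T, s.Finite → s.ncard ≤ n) : T.Finite ∧ T.ncard ≤ n := by
  have hfin : T.Finite := by
    by_contra hx
    obtain ⟨s, hsT, hsf, hcard⟩ := (show T.Infinite from hx).exists_subset_ncard_eq (n + 1)
    have := h s hsT hsf
    omega
  exact ⟨hfin, h T Subset.rfl hfin⟩

/-- Ultrafilter gluing: if for every natural `R` there is a family of uniformly bounded
subsets covering the ball of radius `R` around a basepoint `e`, with `r`-multiplicity at
most `n+1` everywhere, then the whole space has such a cover. -/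
lemma glue_covers {G : Type*} [MetricSpace G] (e : G) {r D : ℝ} {n : ℕ}
    (W : ℕ → Set (Set G))
    (hcov : ∀ R : ℕ, ∀ x : G, dist x e < R → ∃ w ∈ W R, x ∈ w)
    (hdiam : ∀ R : ℕ, ∀ w ∈ W R, EMetric.diam w ≤ ENNReal.ofReal D)
    (hmul : ∀ (R : ℕ) (x : G), {w ∈ W R | (w ∩ Metric.ball x r).Nonempty}.Finite ∧
      {w ∈ W R | (w ∩ Metric.ball x r).Nonempty}.ncard ≤ n + 1) :
    ∃ U : Set (Set G), ⋃₀ U = univ ∧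
      (∀ u ∈ U, EMetric.diam u ≤ ENNReal.ofReal D) ∧
      ∀ x : G, {u ∈ U | (u ∩ Metric.ball x r).Nonempty}.Finite ∧
        {u ∈ U | (u ∩ Metric.ball x r).Nonempty}.ncard ≤ n + 1 := by
  classical
  let 𝒰 : Ultrafilter ℕ := Ultrafilter.of Filter.cofinite
  have h𝒰 : (𝒰 : Filter ℕ) ≤ Filter.cofinite := Ultrafilter.of_le _
  set S : Set (ℕ → Set G) := {f | ∀ R, f R ∈ insert (∅ : Set G) (W R)} with hS
  set v : (ℕ → Set G) → Set G := fun f => {y | {R | y ∈ f R} ∈ 𝒰} with hv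
  refine ⟨v '' S, ?_, ?_, ?_⟩
  · -- covers
    apply Set.eq_univ_of_forall
    intro x
    have hf : ∀ R : ℕ, ∃ w, w ∈ insert (∅ : Set G) (W R) ∧ (dist x e < R → x ∈ w) := by
      intro R
      by_cases hx : dist x e < R
      · obtain ⟨w, hw, hxw⟩ := hcov R x hx
        exact ⟨w, Set.mem_insert_of_mem _ hw, fun _ => hxw⟩
      · exact ⟨∅, Set.mem_insert _ _, fun h => absurd h hx⟩
    choose f hfS hfx using hf
    refine Set.mem_sUnion.2 ⟨v f, ⟨f, hfS, rfl⟩, ?_⟩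
    show {R | x ∈ f R} ∈ 𝒰
    apply h𝒰
    rw [Filter.mem_cofinite]
    apply Set.Finite.subset (Set.finite_Iic ⌈dist x e⌉₊)
    intro R hR
    simp only [Set.mem_compl_iff, Set.mem_setOf_eq] at hR
    have hnlt : ¬ dist x e < R := fun hlt => hR (hfx R hlt)
    have := le_trans (not_lt.1 hnlt) (Nat.le_ceil (dist x e))
    exact Set.mem_Iic.2 (by exact_mod_cast this)
  · -- diam
    rintro u ⟨f, hfS, rfl⟩
    apply EMetric.diam_le
    intro y hy z hz
    have hy' : {R | y ∈ f R} ∈ 𝒰 := hy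
    have hz' : {R | z ∈ f R} ∈ 𝒰 := hz
    obtain ⟨R, hyR, hzR⟩ := Filter.nonempty_of_mem (Filter.inter_mem hy' hz')
    rcases Set.mem_insert_iff.1 (hfS R) with hE | hW
    · have hy2 : y ∈ f R := hyR
      rw [hE] at hy2; exact absurd hy2 (Set.notMem_empty _)
    · exact le_trans (EMetric.edist_le_diam_of_mem hyR hzR) (hdiam R _ hW)
  · -- multiplicity
    intro x0
    apply aux_finite_card
    intro t ht htf
    have hmemT : ∀ u ∈ t, ∃ f, f ∈ S ∧ v f = u ∧ ∃ y, y ∈ u ∩ Metric.ball x0 r := by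
      intro u hu
      obtain ⟨⟨f, hfS, hfu⟩, hne⟩ := ht hu
      exact ⟨f, hfS, hfu, hne⟩
    choose F hFS hFv Y hY using hmemT
    haveI : Finite ↥t := htf.to_subtype
    have hA : ∀ u : ↥t, {R | Y u.1 u.2 ∈ F u.1 u.2 R} ∈ 𝒰 := by
      intro u
      have h1 : Y u.1 u.2 ∈ u.1 := (hY u.1 u.2).1
      have h2 : Y u.1 u.2 ∈ v (F u.1 u.2) := by rw [hFv u.1 u.2]; exact h1
      exact h2
    have hB : ∀ p : ↥t × ↥t, p.1.1 ≠ p.2.1 →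
        {R | F p.1.1 p.1.2 R ≠ F p.2.1 p.2.2 R} ∈ 𝒰 := by
      intro p hne
      have hvne : v (F p.1.1 p.1.2) ≠ v (F p.2.1 p.2.2) := by
        rw [hFv, hFv]; exact hne
      have hex : ∃ z, (z ∈ v (F p.1.1 p.1.2) ∧ z ∉ v (F p.2.1 p.2.2)) ∨
          (z ∈ v (F p.2.1 p.2.2) ∧ z ∉ v (F p.1.1 p.1.2)) := by
        by_contra hzc
        push_neg at hzc
        apply hvne
        ext z
        exact ⟨fun hz => (hzc z).1 hz, fun hz => (hzc z).2 hz⟩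
      obtain ⟨z, hz⟩ := hex
      rcases hz with ⟨hz1, hz2⟩ | ⟨hz1, hz2⟩
      · have h1 : {R | z ∈ F p.1.1 p.1.2 R} ∈ 𝒰 := hz1
        have h2 : {R | z ∈ F p.2.1 p.2.2 R}ᶜ ∈ 𝒰 := Ultrafilter.compl_mem_iff_notMem.2 hz2
        refine Filter.mem_of_superset (Filter.inter_mem h1 h2) ?_
        rintro R ⟨hR1, hR2⟩
        have hz1R : z ∈ F p.1.1 p.1.2 R := hR1
        have hz2R : z ∉ F p.2.1 p.2.2 R := hR2
        intro hEq
        exact hz2R (by rw [← hEq]; exact hz1R)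
      · have h1 : {R | z ∈ F p.2.1 p.2.2 R} ∈ 𝒰 := hz1
        have h2 : {R | z ∈ F p.1.1 p.1.2 R}ᶜ ∈ 𝒰 := Ultrafilter.compl_mem_iff_notMem.2 hz2
        refine Filter.mem_of_superset (Filter.inter_mem h1 h2) ?_
        rintro R ⟨hR1, hR2⟩
        have hz1R : z ∈ F p.2.1 p.2.2 R := hR1
        have hz2R : z ∉ F p.1.1 p.1.2 R := hR2
        intro hEq
        exact hz2R (by rw [hEq]; exact hz1R)
    have hD : ∀ p : ↥t × ↥t,
        {R | p.1.1 = p.2.1 ∨ F p.1.1 p.1.2 R ≠ F p.2.1 p.2.2 R} ∈ 𝒰 := by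
      intro p
      by_cases hpe : p.1.1 = p.2.1
      · exact Filter.mem_of_superset Filter.univ_mem (fun R _ => Or.inl hpe)
      · exact Filter.mem_of_superset (hB p hpe) (fun R hR => Or.inr hR)
    have hE : ((⋂ u : ↥t, {R | Y u.1 u.2 ∈ F u.1 u.2 R}) ∩
        ⋂ p : ↥t × ↥t, {R | p.1.1 = p.2.1 ∨ F p.1.1 p.1.2 R ≠ F p.2.1 p.2.2 R}) ∈ 𝒰 :=
      Filter.inter_mem (Filter.iInter_mem.2 hA) (Filter.iInter_mem.2 hD)
    obtain ⟨R0, hR0A, hR0D⟩ := Filter.nonempty_of_mem hE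
    set Φ : Set G → Set G := fun u => if h : u ∈ t then F u h R0 else ∅ with hΦ
    have hmaps : ∀ u ∈ t, Φ u ∈ {w ∈ W R0 | (w ∩ Metric.ball x0 r).Nonempty} := by
      intro u hu
      have hΦu : Φ u = F u hu R0 := dif_pos hu
      have hyF : Y u hu ∈ F u hu R0 := Set.mem_iInter.1 hR0A ⟨u, hu⟩
      have hyB : Y u hu ∈ Metric.ball x0 r := (hY u hu).2
      constructor
      · rcases Set.mem_insert_iff.1 (hFS u hu R0) with hEm | hWm
        · rw [hEm] at hyF; exact absurd hyF (Set.notMem_empty _)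
        · rw [hΦu]; exact hWm
      · rw [hΦu]; exact ⟨Y u hu, hyF, hyB⟩
    have hinj : Set.InjOn Φ t := by
      intro u1 h1 u2 h2 heq
      by_contra hne
      have := Set.mem_iInter.1 hR0D (⟨⟨u1, h1⟩, ⟨u2, h2⟩⟩ : ↥t × ↥t)
      rcases this with hpe | hneq
      · exact hne hpe
      · apply hneq
        have e1 : Φ u1 = F u1 h1 R0 := dif_pos h1
        have e2 : Φ u2 = F u2 h2 R0 := dif_pos h2
        rw [← e1, ← e2, heq]
    calc t.ncard ≤ {w ∈ W R0 | (w ∩ Metric.ball x0 r).Nonempty}.ncard :=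
          Set.ncard_le_ncard_of_injOn Φ hmaps hinj (hmul R0 x0).1
      _ ≤ n + 1 := (hmul R0 x0).2

theorem small_of_asdim_lt_in_group (G : Type*) [Group G] [MetricSpace G]
    (hinv : ∀ z x y : G, dist (z * x) (z * y) = dist x y)
    (hproper : ∀ (x : G) (R : ℝ), IsCompact (Metric.closedBall x R))
    (A : Set G) (h : ∃ n : ℕ, AsdimLE ↥A n ∧ ¬ AsdimLE G n) :
    IsSmall A := by
  classical
  obtain ⟨n, hA, hG⟩ := h
  intro L hL
  obtain ⟨r0, hr0, hLlarge⟩ := hL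
  by_contra hnl
  apply hG
  rw [IsLarge] at hnl
  push_neg at hnl
  -- separation: for every r > 0 there is x whose r-ball misses L \ A
  have hsep : ∀ r > (0 : ℝ), ∃ x : G, ∀ y ∈ L \ A, r ≤ dist x y := hnl
  -- the r0-neighborhood of A
  set N : Set G := {g | ∃ a ∈ A, dist g a < r0} with hN
  -- N is thick
  have hthick : ∀ R : ℝ, ∃ x : G, ∀ g : G, dist g x < R → g ∈ N := by
    intro R
    obtain ⟨x, hx⟩ := hsep (max R 0 + r0) (add_pos_of_nonneg_of_pos (le_max_right R 0) hr0)
    refine ⟨x, fun g hg => ?_⟩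
    obtain ⟨y, hyL, hyd⟩ := hLlarge g
    have hxy : dist x y < max R 0 + r0 := by
      calc dist x y ≤ dist x g + dist g y := dist_triangle x g y
        _ < max R 0 + r0 := by
            have h1 : dist x g < max R 0 := lt_of_lt_of_le (dist_comm x g ▸ hg) (le_max_left R 0)
            linarith
    have hyA : y ∈ A := by
      by_contra hyA
      exact absurd (hx y ⟨hyL, hyA⟩) (not_le.2 hxy)
    exact ⟨y, hyA, hyd⟩
  -- choice of nearby point in A
  have hchoice : ∀ g : G, ∃ a : G, g ∈ N → a ∈ A ∧ dist g a < r0 := by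
    intro g
    by_cases hg : g ∈ N
    · obtain ⟨a, ha, hd⟩ := hg
      exact ⟨a, fun _ => ⟨ha, hd⟩⟩
    · exact ⟨g, fun hgn => absurd hgn hg⟩
  choose p hp using hchoice
  -- now prove AsdimLE G n
  intro r hr
  have hs : (0 : ℝ) < 2 * r + 2 * r0 := by linarith
  obtain ⟨D, hD, U, hUcov, hUdiam, hUmul⟩ := hA (2 * r + 2 * r0) hs
  -- the induced cover of N
  set Vv : Set ↥A → Set G := fun u => {g | ∃ hg : g ∈ N, (⟨p g, (hp g hg).1⟩ : ↥A) ∈ u} with hVv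
  set V' : Set (Set G) := Vv '' U with hV'
  have hVcov : ∀ g ∈ N, ∃ v ∈ V', g ∈ v := by
    intro g hg
    have : (⟨p g, (hp g hg).1⟩ : ↥A) ∈ ⋃₀ U := by rw [hUcov]; trivial
    obtain ⟨u, hu, hau⟩ := this
    exact ⟨Vv u, Set.mem_image_of_mem _ hu, ⟨hg, hau⟩⟩
  have hVdiam : ∀ v ∈ V', EMetric.diam v ≤ ENNReal.ofReal (D + 2 * r0) := by
    rintro v ⟨u, hu, rfl⟩
    apply EMetric.diam_le
    rintro g ⟨hgN, hgu⟩ g' ⟨hg'N, hg'u⟩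
    have hd1 : edist g (p g) ≤ ENNReal.ofReal r0 := by
      rw [edist_dist]; exact ENNReal.ofReal_le_ofReal (hp g hgN).2.le
    have hd3 : edist (p g') g' ≤ ENNReal.ofReal r0 := by
      rw [edist_dist, dist_comm]; exact ENNReal.ofReal_le_ofReal (hp g' hg'N).2.le
    have hd2 : edist (p g) (p g') ≤ ENNReal.ofReal D := by
      have := EMetric.edist_le_diam_of_mem hgu hg'u
      rw [Subtype.edist_eq] at this
      exact le_trans this (hUdiam u hu)
    calc edist g g' ≤ edist g (p g) + edist (p g) (p g') + edist (p g') g' :=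
          edist_triangle4 g (p g) (p g') g'
      _ ≤ ENNReal.ofReal r0 + ENNReal.ofReal D + ENNReal.ofReal r0 := by
          exact add_le_add (add_le_add hd1 hd2) hd3
      _ = ENNReal.ofReal (D + 2 * r0) := by
          rw [← ENNReal.ofReal_add hr0.le hD.le, ← ENNReal.ofReal_add (by linarith) hr0.le]
          ring_nf
  have hVmul : ∀ x0 : G, {v ∈ V' | (v ∩ Metric.ball x0 r).Nonempty}.Finite ∧
      {v ∈ V' | (v ∩ Metric.ball x0 r).Nonempty}.ncard ≤ n + 1 := by
    intro x0
    set T := {v ∈ V' | (v ∩ Metric.ball x0 r).Nonempty} with hT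
    by_cases hTne : T.Nonempty
    · obtain ⟨v0, hv0V, hv0ne⟩ := hTne
      obtain ⟨g0, hg0v, hg0b⟩ := hv0ne
      obtain ⟨u0, hu0, rfl⟩ := hv0V
      obtain ⟨hg0N, hg0u⟩ := hg0v
      set a0 : ↥A := ⟨p g0, (hp g0 hg0N).1⟩ with ha0
      have key : T ⊆ Vv '' {u ∈ U | (u ∩ Metric.ball a0 (2 * r + 2 * r0)).Nonempty} := by
        rintro v ⟨⟨u, hu, rfl⟩, g, ⟨hgN, hgu⟩, hgb⟩
        refine ⟨u, ⟨hu, ⟨⟨p g, (hp g hgN).1⟩, hgu, ?_⟩⟩, rfl⟩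
        rw [Metric.mem_ball, Subtype.dist_eq]
        have h1 : dist (p g) g < r0 := by rw [dist_comm]; exact (hp g hgN).2
        have h2 : dist g x0 < r := Metric.mem_ball.1 hgb
        have h3 : dist x0 g0 < r := by rw [dist_comm]; exact Metric.mem_ball.1 hg0b
        have h4 : dist g0 (p g0) < r0 := (hp g0 hg0N).2
        have t1 : dist (p g) (p g0) ≤ dist (p g) g + dist g x0 + dist x0 (p g0) :=
          dist_triangle4 _ _ _ _
        have t2 : dist x0 (p g0) ≤ dist x0 g0 + dist g0 (p g0) := dist_triangle _ _ _
        show dist (p g) (p g0) < 2 * r + 2 * r0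
        linarith
      obtain ⟨hfinU, hcardU⟩ := hUmul a0
      refine ⟨(hfinU.image Vv).subset key, ?_⟩
      calc T.ncard ≤ (Vv '' {u ∈ U | (u ∩ Metric.ball a0 (2 * r + 2 * r0)).Nonempty}).ncard :=
            Set.ncard_le_ncard key (hfinU.image Vv)
        _ ≤ {u ∈ U | (u ∩ Metric.ball a0 (2 * r + 2 * r0)).Nonempty}.ncard :=
            Set.ncard_image_le hfinU
        _ ≤ n + 1 := hcardU
    · rw [Set.not_nonempty_iff_eq_empty] at hTne
      rw [hTne]
      exact ⟨Set.finite_empty, by simp⟩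
  -- translate to balls around 1
  have hxR : ∀ R : ℕ, ∃ x : G, ∀ g : G, dist g x < R → g ∈ N := fun R => hthick R
  choose xR hxRN using hxR
  set W : ℕ → Set (Set G) := fun R => (Set.image (fun g => (xR R)⁻¹ * g)) '' V' with hW
  have hWcov : ∀ R : ℕ, ∀ x : G, dist x (1 : G) < R → ∃ w ∈ W R, x ∈ w := by
    intro R x hx
    have hd1 : dist (xR R * x) (xR R) < R := by
      have hh := hinv (xR R) x 1
      rw [mul_one] at hh
      rw [hh]
      exact hx
    obtain ⟨v, hv, hvmem⟩ := hVcov _ (hxRN R _ hd1)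
    refine ⟨(fun g => (xR R)⁻¹ * g) '' v, ⟨v, hv, rfl⟩, ⟨xR R * x, hvmem, ?_⟩⟩
    simp
  have hWdiam : ∀ R : ℕ, ∀ w ∈ W R, EMetric.diam w ≤ ENNReal.ofReal (D + 2 * r0) := by
    rintro R w ⟨v, hv, rfl⟩
    apply EMetric.diam_le
    rintro a ⟨a', ha', rfl⟩ b ⟨b', hb', rfl⟩
    have hde : dist ((xR R)⁻¹ * a') ((xR R)⁻¹ * b') = dist a' b' := hinv _ _ _
    rw [edist_dist, hde, ← edist_dist]
    exact le_trans (EMetric.edist_le_diam_of_mem ha' hb') (hVdiam v hv)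
  have hWmul : ∀ (R : ℕ) (x0 : G),
      {w ∈ W R | (w ∩ Metric.ball x0 r).Nonempty}.Finite ∧
      {w ∈ W R | (w ∩ Metric.ball x0 r).Nonempty}.ncard ≤ n + 1 := by
    intro R x0
    have hsub : {w ∈ W R | (w ∩ Metric.ball x0 r).Nonempty} ⊆
        (Set.image (fun g => (xR R)⁻¹ * g)) ''
          {v ∈ V' | (v ∩ Metric.ball (xR R * x0) r).Nonempty} := by
      rintro w ⟨⟨v, hv, rfl⟩, y, ⟨g, hgv, rfl⟩, hyb⟩
      refine ⟨v, ⟨hv, ⟨g, hgv, ?_⟩⟩, rfl⟩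
      rw [Metric.mem_ball]
      have hlt : dist ((xR R)⁻¹ * g) x0 < r := Metric.mem_ball.1 hyb
      have he : dist (xR R * ((xR R)⁻¹ * g)) (xR R * x0) = dist ((xR R)⁻¹ * g) x0 := hinv _ _ _
      rw [mul_inv_cancel_left] at he
      rw [he]
      exact hlt
    obtain ⟨hfinV, hcardV⟩ := hVmul (xR R * x0)
    refine ⟨(hfinV.image _).subset hsub, ?_⟩
    calc {w ∈ W R | (w ∩ Metric.ball x0 r).Nonempty}.ncard
        ≤ ((Set.image (fun g => (xR R)⁻¹ * g)) ''
            {v ∈ V' | (v ∩ Metric.ball (xR R * x0) r).Nonempty}).ncard :=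
          Set.ncard_le_ncard hsub (hfinV.image _)
      _ ≤ {v ∈ V' | (v ∩ Metric.ball (xR R * x0) r).Nonempty}.ncard :=
          Set.ncard_image_le hfinV
      _ ≤ n + 1 := hcardV
  obtain ⟨U', hU'cov, hU'diam, hU'mul⟩ := glue_covers (1 : G) W hWcov hWdiam hWmul
  exact ⟨D + 2 * r0, by linarith, U', hU'cov, hU'diam, hU'mul⟩
end

section
/- Let X be a metric space and n ∈ ℕ. Then asdim_col(X) ≤ n if and only if for every r > 0 there exist D > 0 and a coloring χ : X → Fin (n+1) such that every χ-monochrome r-chain C ⊆ X has diameter at most D. -/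
open Metric Set

/-- A list of points is an `r`-chain if consecutive points are at distance at most `r`. -/
def IsRChain {X : Type*} [MetricSpace X] (r : ℝ) (l : List X) : Prop :=
  l.Chain' (fun a b => dist a b ≤ r)

/-- A list of points is monochrome with respect to a coloring `χ` if `χ` is constant on it. -/
def Monochrome {X : Type*} {n : ℕ} (χ : X → Fin (n + 1)) (l : List X) : Prop :=
  ∀ x ∈ l, ∀ y ∈ l, χ x = χ y

/-- `AsdimColLE X n` means the *colored* asymptotic dimension of `X` is at most `n`:
for every `r > 0` there are `D > 0` and a cover of `X` by sets of diameter at most `D`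
which splits into `n + 1` many `r`-disjoint subfamilies. -/
def AsdimColLE (X : Type*) [MetricSpace X] (n : ℕ) : Prop :=
  ∀ r > (0 : ℝ), ∃ D > (0 : ℝ), ∃ U : Fin (n + 1) → Set (Set X),
    (∀ x : X, ∃ i : Fin (n + 1), ∃ u ∈ U i, x ∈ u) ∧
    (∀ i : Fin (n + 1), ∀ u ∈ U i, ∀ v ∈ U i, u ≠ v → ∀ x ∈ u, ∀ y ∈ v, r < dist x y) ∧
    (∀ i : Fin (n + 1), ∀ u ∈ U i, EMetric.diam u ≤ ENNReal.ofReal D)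


private lemma chain_const_aux {X : Type*} [MetricSpace X] {n : ℕ} {r : ℝ}
    {χ : X → Fin (n + 1)} (f : X → Set X)
    (hf : ∀ a b : X, dist a b ≤ r → χ a = χ b → f a = f b) :
    ∀ (t : List X) (a : X), IsRChain r (a :: t) → Monochrome χ (a :: t) →
      ∀ x ∈ a :: t, f x = f a := by
  intro t
  induction t with
  | nil =>
    intro a _ _ x hx
    simp only [List.mem_singleton] at hx
    subst hx; rfl
  | cons b t ih =>
    intro a hc hm x hx
    have hab : dist a b ≤ r := (List.isChain_cons_cons.mp hc).1
    have hcb : IsRChain r (b :: t) := (List.isChain_cons_cons.mp hc).2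
    have hfab : f a = f b := hf a b hab (hm a (by simp) b (by simp))
    rcases List.mem_cons.mp hx with h | h
    · subst h; rfl
    · have hmb : Monochrome χ (b :: t) := by
        intro p hp q hq
        exact hm p (List.mem_cons_of_mem _ hp) q (List.mem_cons_of_mem _ hq)
      rw [ih b hcb hmb x h, hfab]

private lemma reflTransGen_chain {X : Type*} [MetricSpace X] {n : ℕ} {r : ℝ}
    {χ : X → Fin (n + 1)} {x y : X}
    (h : Relation.ReflTransGen (fun a b => dist a b ≤ r ∧ χ a = χ b) x y) :
    ∃ l : List X, IsRChain r l ∧ Monochrome χ l ∧ x ∈ l ∧ y ∈ l := by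
  have key : ∃ l : List X, IsRChain r l ∧ Monochrome χ l ∧
      l.head? = some x ∧ l.getLast? = some y := by
    induction h with
    | refl =>
      exact ⟨[x], List.isChain_singleton x, by intro p hp q hq; simp_all, rfl, rfl⟩
    | @tail b c hxb hbc ih =>
      obtain ⟨l, hch, hm, hh, hl⟩ := ih
      have hxl : x ∈ l := List.mem_of_mem_head? (by rw [hh]; rfl)
      have hbl : b ∈ l := by
        obtain ⟨hne, h2⟩ := List.mem_getLast?_eq_getLast (show b ∈ l.getLast? by rw [hl]; rfl)
        rw [h2]; exact List.getLast_mem hne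
      refine ⟨l ++ [c], ?_, ?_, ?_, ?_⟩
      · refine List.isChain_append.mpr ⟨hch, List.isChain_singleton c, ?_⟩
        intro p hp q hq
        rw [hl] at hp
        simp only [Option.mem_def, Option.some.injEq] at hp
        simp only [List.head?_cons, Option.mem_def, Option.some.injEq] at hq
        subst hp; subst hq
        exact hbc.1
      · have hcx : χ c = χ x := by rw [← hbc.2]; exact hm b hbl x hxl
        intro p hp q hq
        have aux : ∀ z ∈ l ++ [c], χ z = χ x := by
          intro z hz
          rcases List.mem_append.mp hz with h' | h'
          · exact hm z h' x hxl
          · simp only [List.mem_singleton] at h'; subst h'; exact hcx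
        rw [aux p hp, aux q hq]
      · cases l with
        | nil => simp at hh
        | cons a t => simpa using hh
      · exact List.getLast?_concat
  obtain ⟨l, hch, hm, hh, hl⟩ := key
  refine ⟨l, hch, hm, List.mem_of_mem_head? (by rw [hh]; rfl), ?_⟩
  obtain ⟨hne, h2⟩ := List.mem_getLast?_eq_getLast (show y ∈ l.getLast? by rw [hl]; rfl)
  rw [h2]; exact List.getLast_mem hne

theorem asdimCol_iff_coloring {X : Type*} [MetricSpace X] (n : ℕ) :
    AsdimColLE X n ↔
      ∀ r > (0 : ℝ), ∃ D > (0 : ℝ), ∃ χ : X → Fin (n + 1),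
        ∀ l : List X, IsRChain r l → Monochrome χ l →
          EMetric.diam {x | x ∈ l} ≤ ENNReal.ofReal D := by
  constructor
  · intro h r hr
    obtain ⟨D, hD, U, hcov, hdisj, hdiam⟩ := h r hr
    classical
    refine ⟨D, hD, fun x => (hcov x).choose, ?_⟩
    set χ : X → Fin (n + 1) := fun x => (hcov x).choose with hχ
    have hspec : ∀ x : X, ∃ u ∈ U (χ x), x ∈ u := fun x => (hcov x).choose_spec
    set f : X → Set X := fun x => (hspec x).choose with hfdef
    have hfspec : ∀ x : X, f x ∈ U (χ x) ∧ x ∈ f x := fun x => (hspec x).choose_spec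
    have hf : ∀ a b : X, dist a b ≤ r → χ a = χ b → f a = f b := by
      intro a b hab hcab
      by_contra hne
      have := hdisj (χ a) (f a) (hfspec a).1 (f b) (by rw [hcab]; exact (hfspec b).1)
        hne a (hfspec a).2 b (hfspec b).2
      linarith
    intro l hch hm
    cases l with
    | nil => simp [EMetric.diam, Metric.ediam_empty]
    | cons a t =>
      have hsub : {x | x ∈ a :: t} ⊆ f a := by
        intro x hx
        have := chain_const_aux f hf t a hch hm x hx
        rw [← this]
        exact (hfspec x).2
      calc EMetric.diam {x | x ∈ a :: t} ≤ EMetric.diam (f a) := EMetric.diam_mono hsub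
        _ ≤ ENNReal.ofReal D := hdiam (χ a) (f a) (hfspec a).1
  · intro h r hr
    obtain ⟨D, hD, χ, hχ⟩ := h r hr
    set S : X → X → Prop := fun a b => dist a b ≤ r ∧ χ a = χ b with hS
    set E : X → X → Prop := Relation.ReflTransGen S with hE
    have hSsymm : Symmetric S := by
      intro a b hab; exact ⟨by rw [dist_comm]; exact hab.1, hab.2.symm⟩
    have hEsymm : Symmetric E := fun a b h =>
      (@Relation.ReflTransGen.stdSymm _ S ⟨fun a b h => hSsymm h⟩).symm a b h
    have hEχ : ∀ a b, E a b → χ a = χ b := by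
      intro a b hab
      induction hab with
      | refl => rfl
      | tail _ hbc ih => exact ih.trans hbc.2
    have hclass : ∀ a b, E a b → {y | E a y} = {y | E b y} := by
      intro a b hab
      ext z
      exact ⟨fun hz => Relation.ReflTransGen.trans (hEsymm hab) hz,
        fun hz => Relation.ReflTransGen.trans hab hz⟩
    have hdist : ∀ a b, E a b → edist a b ≤ ENNReal.ofReal D := by
      intro a b hab
      obtain ⟨l, hch, hm, hal, hbl⟩ := reflTransGen_chain hab
      calc edist a b ≤ EMetric.diam {x | x ∈ l} :=
            EMetric.edist_le_diam_of_mem hal hbl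
        _ ≤ ENNReal.ofReal D := hχ l hch hm
    refine ⟨D, hD, fun i => {c | ∃ x, χ x = i ∧ c = {y | E x y}}, ?_, ?_, ?_⟩
    · intro x
      exact ⟨χ x, {y | E x y}, ⟨x, rfl, rfl⟩, Relation.ReflTransGen.refl⟩
    · rintro i u ⟨a, ha, rfl⟩ v ⟨b, hb, rfl⟩ huv x hx y hy
      by_contra hcon
      push_neg at hcon
      have hxy : S x y := ⟨hcon, by rw [← hEχ a x hx, ← hEχ b y hy, ha, hb]⟩
      exact huv (hclass a b (Relation.ReflTransGen.trans hx
        (Relation.ReflTransGen.trans (Relation.ReflTransGen.single hxy) (hEsymm hy))))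
    · rintro i u ⟨a, ha, rfl⟩
      refine EMetric.diam_le ?_
      intro y hy z hz
      exact hdist y z (Relation.ReflTransGen.trans (hEsymm hy) hz)
end

section
/- For every metric space X and every n ∈ ℕ, asdim(X) ≤ n if and only if asdim_col(X) ≤ n. -/
open Metric Set

namespace AsdimAux

variable {X : Type*} [MetricSpace X]

/-- The "tent function" of a set `u`: `L` minus the distance to `u`. -/
noncomputable def fA (L : ℝ) (u : Set X) (x : X) : ℝ := L - Metric.infDist x u

/-- The collection of members of `U'` whose tent function at `x` exceeds level `k+1`. -/
def SigA (U' : Set (Set X)) (L r : ℝ) (k : ℕ) (x : X) : Set (Set X) :=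
  {u | u ∈ U' ∧ ((k : ℝ) + 1) * (r + 1) < fA L u x}

/-- `x` avoids the interval `(k(r+1), (k+1)(r+1)]` for all tent functions. -/
def OkA (U' : Set (Set X)) (L r : ℝ) (k : ℕ) (x : X) : Prop :=
  ∀ u ∈ U', fA L u x ≤ (k : ℝ) * (r + 1) ∨ ((k : ℝ) + 1) * (r + 1) < fA L u x

/-- The piece of color `k` associated to the collection `σ`. -/
def AA (U' : Set (Set X)) (L r : ℝ) (k : ℕ) (σ : Set (Set X)) : Set X :=
  {x | OkA U' L r k x ∧ SigA U' L r k x = σ}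

lemma fA_lip (L : ℝ) (u : Set X) (x y : X) : fA L u x - fA L u y ≤ dist x y := by
  have h := Metric.infDist_le_infDist_add_dist (s := u) (x := y) (y := x)
  have h2 : dist y x = dist x y := dist_comm y x
  simp only [fA]
  linarith

lemma sep_core (U' : Set (Set X)) {L r : ℝ} (k : ℕ) {u : Set X} {x y : X}
    (hxu : u ∈ SigA U' L r k x) (hok : OkA U' L r k y) (hyu : u ∉ SigA U' L r k y) :
    r < dist x y := by
  obtain ⟨huU, hfx⟩ := hxu
  have hfy : fA L u y ≤ (k : ℝ) * (r + 1) := by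
    rcases hok u huU with h | h
    · exact h
    · exact absurd ⟨huU, h⟩ hyu
  have hlip := fA_lip L u x y
  have hring : ((k : ℝ) + 1) * (r + 1) = (k : ℝ) * (r + 1) + (r + 1) := by ring
  linarith

end AsdimAux

open AsdimAux in
theorem asdim_eq_asdimCol (X : Type*) [MetricSpace X] (n : ℕ) :
    AsdimLE X n ↔ AsdimColLE X n := by
  constructor
  · -- hard direction
    intro h r hr
    have hr1 : (0 : ℝ) < r + 1 := by linarith
    have hLpos : (0 : ℝ) < ((n : ℝ) + 2) * (r + 1) := by positivity
    obtain ⟨D, hD, U, hUcov, hUdiam, hUmul⟩ := h (((n : ℝ) + 2) * (r + 1)) hLpos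
    set L : ℝ := ((n : ℝ) + 2) * (r + 1) with hLdef
    set U' : Set (Set X) := {u | u ∈ U ∧ u.Nonempty} with hU'def
    have hU'sub : U' ⊆ U := fun u hu => hu.1
    have htL : ∀ k : ℕ, k ≤ n → ((k : ℝ) + 1) * (r + 1) < L := by
      intro k hk
      have hkn : (k : ℝ) ≤ (n : ℝ) := by exact_mod_cast hk
      rw [hLdef]; nlinarith
    -- positivity of f iff meeting the L-ball
    have hfpos : ∀ u ∈ U', ∀ x : X, 0 < fA L u x ↔ (u ∩ ball x L).Nonempty := by
      intro u hu x
      simp only [AsdimAux.fA]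
      constructor
      · intro h0
        have hlt : Metric.infDist x u < L := by linarith
        obtain ⟨y, hyu, hyd⟩ := (Metric.infDist_lt_iff hu.2).mp hlt
        exact ⟨y, hyu, by simpa [Metric.mem_ball, dist_comm] using hyd⟩
      · rintro ⟨y, hyu, hyb⟩
        have h1 : Metric.infDist x u ≤ dist x y := Metric.infDist_le_dist_of_mem hyu
        have h2 : dist x y < L := by simpa [Metric.mem_ball, dist_comm] using hyb
        linarith
    -- every point lies in some member of U', at tent value exactly L
    have hcover0 : ∀ x : X, ∃ u₀, u₀ ∈ U' ∧ x ∈ u₀ ∧ fA L u₀ x = L := by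
      intro x
      have hx : x ∈ ⋃₀ U := hUcov ▸ mem_univ x
      obtain ⟨u₀, hu₀U, hxu⟩ := hx
      exact ⟨u₀, ⟨hu₀U, ⟨x, hxu⟩⟩, hxu, by
        simp [AsdimAux.fA, Metric.infDist_zero_of_mem hxu]⟩
    -- pigeonhole: every point has a good color
    have hOk : ∀ x : X, ∃ k : ℕ, k ≤ n ∧ OkA U' L r k x := by
      intro x
      by_contra hcon
      push_neg at hcon
      have hcon' : ∀ k : ℕ, k ≤ n → ∃ u, u ∈ U' ∧
          (k : ℝ) * (r + 1) < fA L u x ∧ fA L u x ≤ ((k : ℝ) + 1) * (r + 1) := by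
        intro k hk
        have hh := hcon k hk
        simp only [AsdimAux.OkA] at hh
        push_neg at hh
        obtain ⟨u, hu, h1, h2⟩ := hh
        exact ⟨u, hu, h1, h2⟩
      choose g hg1 hg2 hg3 using hcon'
      obtain ⟨u₀, hu₀, hxu₀, hfu₀⟩ := hcover0 x
      set T : Set (Set X) := {u | u ∈ U ∧ (u ∩ ball x L).Nonempty} with hTdef
      obtain ⟨hTfin, hTcard⟩ := hUmul x
      have hTfin' : T.Finite := hTfin
      have hTcard' : T.ncard ≤ n + 1 := hTcard
      set G : Fin (n + 1) → Set X := fun i => g i.1 (Nat.lt_succ_iff.mp i.2) with hGdef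
      have hGT : ∀ i : Fin (n + 1), G i ∈ T := by
        intro i
        have hk := Nat.lt_succ_iff.mp i.2
        have hU'mem := hg1 i.1 hk
        have hlow := hg2 i.1 hk
        have hnn : (0 : ℝ) ≤ (i.1 : ℝ) * (r + 1) := by positivity
        have hpos : 0 < fA L (g i.1 hk) x := lt_of_le_of_lt hnn hlow
        exact ⟨hU'mem.1, (hfpos _ hU'mem x).mp hpos⟩
      have hu₀T : u₀ ∈ T := by
        have hpos : 0 < fA L u₀ x := by rw [hfu₀]; exact hLpos
        exact ⟨hu₀.1, (hfpos _ hu₀ x).mp hpos⟩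
      have hGne : ∀ i : Fin (n + 1), G i ≠ u₀ := by
        intro i heq
        have hk := Nat.lt_succ_iff.mp i.2
        have hup : fA L (G i) x ≤ ((i.1 : ℝ) + 1) * (r + 1) := hg3 i.1 hk
        have hlt := htL i.1 hk
        rw [heq, hfu₀] at hup
        linarith
      have hGinj : Function.Injective G := by
        intro i j hij
        by_contra hne
        have hne' : i.1 ≠ j.1 := fun hh => hne (Fin.ext hh)
        rcases Nat.lt_or_ge i.1 j.1 with hlt | hge
        · have h1 : fA L (G i) x ≤ ((i.1 : ℝ) + 1) * (r + 1) :=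
            hg3 i.1 (Nat.lt_succ_iff.mp i.2)
          have h2 : (j.1 : ℝ) * (r + 1) < fA L (G j) x :=
            hg2 j.1 (Nat.lt_succ_iff.mp j.2)
          rw [hij] at h1
          have hmono : ((i.1 : ℝ) + 1) * (r + 1) ≤ ((j.1 : ℝ)) * (r + 1) := by
            have : (i.1 : ℝ) + 1 ≤ (j.1 : ℝ) := by exact_mod_cast hlt
            nlinarith
          linarith
        · have hlt : j.1 < i.1 := by omega
          have h1 : fA L (G j) x ≤ ((j.1 : ℝ) + 1) * (r + 1) :=
            hg3 j.1 (Nat.lt_succ_iff.mp j.2)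
          have h2 : (i.1 : ℝ) * (r + 1) < fA L (G i) x :=
            hg2 i.1 (Nat.lt_succ_iff.mp i.2)
          rw [hij] at h2
          have hmono : ((j.1 : ℝ) + 1) * (r + 1) ≤ ((i.1 : ℝ)) * (r + 1) := by
            have : (j.1 : ℝ) + 1 ≤ (i.1 : ℝ) := by exact_mod_cast hlt
            nlinarith
          linarith
      have hsub : insert u₀ (Set.range G) ⊆ T := by
        rintro u (rfl | ⟨i, rfl⟩)
        · exact hu₀T
        · exact hGT i
      have hfinR : (Set.range G).Finite := Set.finite_range G
      have hcard1 : (Set.range G).ncard = n + 1 := by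
        rw [← Set.image_univ, Set.ncard_image_of_injective _ hGinj, Set.ncard_univ,
          Nat.card_eq_fintype_card, Fintype.card_fin]
      have hnotmem : u₀ ∉ Set.range G := by
        rintro ⟨i, hi⟩
        exact hGne i hi
      have hcard2 : (insert u₀ (Set.range G)).ncard = n + 2 := by
        rw [Set.ncard_insert_of_notMem hnotmem hfinR, hcard1]
      have hle := Set.ncard_le_ncard hsub hTfin'
      omega
    -- build the colored families
    refine ⟨D + 2 * L, by positivity, fun i =>
      {a | ∃ σ : Set (Set X), (AA U' L r i.1 σ).Nonempty ∧ a = AA U' L r i.1 σ}, ?_, ?_, ?_⟩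
    · -- cover
      intro x
      obtain ⟨k, hk, hok⟩ := hOk x
      refine ⟨⟨k, by omega⟩, AA U' L r k (SigA U' L r k x),
        ⟨SigA U' L r k x, ⟨x, hok, rfl⟩, rfl⟩, hok, rfl⟩
    · -- separation
      rintro i a ⟨σ, hσne, rfl⟩ b ⟨τ, hτne, rfl⟩ hab x hx y hy
      have hστ : σ ≠ τ := fun hh => hab (by rw [hh])
      obtain ⟨hokx, hsigx⟩ := hx
      obtain ⟨hoky, hsigy⟩ := hy
      have hcases : (∃ u, u ∈ σ ∧ u ∉ τ) ∨ (∃ u, u ∈ τ ∧ u ∉ σ) := by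
        by_contra hc
        push_neg at hc
        exact hστ (Set.Subset.antisymm (fun u hu => hc.1 u hu) (fun u hu => hc.2 u hu))
      rcases hcases with ⟨u, huσ, huτ⟩ | ⟨u, huτ, huσ⟩
      · exact sep_core U' i.1 (hsigx ▸ huσ) hoky (by rw [hsigy]; exact huτ)
      · have := sep_core U' i.1 (hsigy ▸ huτ) hokx (by rw [hsigx]; exact huσ)
        rwa [dist_comm] at this
    · -- diameter
      rintro i a ⟨σ, hσne, rfl⟩
      obtain ⟨x₀, hx₀⟩ := hσne
      obtain ⟨u₀, hu₀, hxu₀, hfu₀⟩ := hcover0 x₀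
      have hu₀σ : u₀ ∈ σ := by
        rw [← hx₀.2]
        exact ⟨hu₀, by rw [hfu₀]; exact htL i.1 (Nat.lt_succ_iff.mp i.2)⟩
      apply EMetric.diam_le
      intro x hx y hy
      have hnear : ∀ z : X, z ∈ AA U' L r i.1 σ → ∃ p ∈ u₀, dist z p < L := by
        intro z hz
        have hmem : u₀ ∈ SigA U' L r i.1 z := by rw [hz.2]; exact hu₀σ
        have hfz := hmem.2
        have hnn : (0 : ℝ) ≤ ((i.1 : ℝ) + 1) * (r + 1) := by positivity
        have hlt : Metric.infDist z u₀ < L := by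
          simp only [AsdimAux.fA] at hfz; linarith
        exact (Metric.infDist_lt_iff hu₀.2).mp hlt
      obtain ⟨px, hpx, hpxd⟩ := hnear x hx
      obtain ⟨py, hpy, hpyd⟩ := hnear y hy
      have hDd : dist px py ≤ D := by
        have h2 : edist px py ≤ ENNReal.ofReal D :=
          le_trans (EMetric.edist_le_diam_of_mem hpx hpy) (hUdiam u₀ hu₀.1)
        rw [edist_dist] at h2
        exact (ENNReal.ofReal_le_ofReal_iff hD.le).mp h2
      have htri : dist x y ≤ D + 2 * L := by
        have t1 : dist x y ≤ dist x px + dist px y := dist_triangle x px y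
        have t2 : dist px y ≤ dist px py + dist py y := dist_triangle px py y
        have t3 : dist py y = dist y py := dist_comm py y
        linarith
      rw [edist_dist]
      exact ENNReal.ofReal_le_ofReal htri
  · -- easy direction
    intro h r hr
    obtain ⟨D, hD, V, hVcov, hVsep, hVdiam⟩ := h (2 * r) (by linarith)
    have hone : ∀ x : X, ∀ i : Fin (n + 1), ∀ u ∈ V i, ∀ v ∈ V i,
        (u ∩ ball x r).Nonempty → (v ∩ ball x r).Nonempty → u = v := by
      intro x i u hu v hv ⟨a, hau, hax⟩ ⟨b, hbv, hbx⟩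
      by_contra hne
      have hsep := hVsep i u hu v hv hne a hau b hbv
      have hda : dist a x < r := Metric.mem_ball.mp hax
      have hdb : dist x b < r := by
        have := Metric.mem_ball.mp hbx; rwa [dist_comm] at this
      have htri : dist a b ≤ dist a x + dist x b := dist_triangle a x b
      linarith
    refine ⟨D, hD, {u | ∃ i, u ∈ V i}, ?_, ?_, ?_⟩
    · apply Set.eq_univ_of_forall
      intro x
      obtain ⟨i, u, hu, hxu⟩ := hVcov x
      exact ⟨u, ⟨i, hu⟩, hxu⟩
    · rintro u ⟨i, hu⟩
      exact hVdiam i u hu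
    · intro x
      set M : Set (Set X) := {u | u ∈ {u | ∃ i, u ∈ V i} ∧ (u ∩ ball x r).Nonempty}
        with hMdef
      have hchoose : ∀ u : M, ∃ i, (u : Set X) ∈ V i := fun u => u.2.1
      choose c hc using hchoose
      have hcinj : Function.Injective c := by
        intro u v huv
        have h1 := hc u
        have h2 := hc v
        rw [huv] at h1
        exact Subtype.ext (hone x (c v) u h1 v h2 u.2.2 v.2.2)
      have hMfin : M.Finite := by
        rw [← Set.finite_coe_iff]
        exact Finite.of_injective c hcinj
      refine ⟨hMfin, ?_⟩
      have hcard : M.ncard = Nat.card M := (Nat.card_coe_set_eq M).symm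
      have hle : Nat.card M ≤ Nat.card (Fin (n + 1)) :=
        Nat.card_le_card_of_injective c hcinj
      have hfinc : Nat.card (Fin (n + 1)) = n + 1 := by simp
      omega
end

section
/- Let X be a metric space and n ∈ ℕ. Then asdim(X) ≤ n if and only if for every r > 0 there exist D > 0 and a coloring χ : X → Fin (n+1) such that every χ-monochrome r-chain C ⊆ X has diameter at most D. -/
open Metric Set

private lemma chain'_head_eq {α β : Type*} (f : α → β) :
    ∀ (tl : List α) (a : α), (a :: tl).Chain' (fun x y => f x = f y) →
      ∀ p ∈ a :: tl, f a = f p := by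
  intro tl
  induction tl with
  | nil => intro a _ p hp; simp at hp; subst hp; rfl
  | cons b tl ih =>
    intro a h p hp
    rw [List.Chain', List.isChain_cons_cons] at h
    rcases List.mem_cons.1 hp with rfl | hp
    · rfl
    · exact h.1.trans (ih b h.2 p hp)

private lemma asdim_to_coloring {X : Type*} [MetricSpace X] (n : ℕ) (h : AsdimLE X n) :
    ∀ r > (0 : ℝ), ∃ D > (0 : ℝ), ∃ χ : X → Fin (n + 1),
        ∀ l : List X, IsRChain r l → Monochrome χ l →
          EMetric.diam {x | x ∈ l} ≤ ENNReal.ofReal D := by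
  classical
  intro r hr
  set s : ℝ := 16 * r * 4 ^ (n + 1) with hsdef
  have hspos : 0 < s := by positivity
  obtain ⟨D, hD, U, hcover, hdiam, hmult⟩ := h s hspos
  set t : ℕ → ℝ := fun j => s * ((4 : ℝ)⁻¹) ^ j with htdef
  have ht0 : t 0 = s := by simp [htdef]
  have htpos : ∀ j, 0 < t j := fun j => by
    simp only [htdef]; positivity
  have htsucc : ∀ j, t (j + 1) = t j / 4 := by
    intro j; simp only [htdef, pow_succ]; ring
  have htmono : ∀ j k, j ≤ k → t k ≤ t j := by
    intro j k hjk
    have h4 : ((4 : ℝ)⁻¹) ^ k ≤ ((4 : ℝ)⁻¹) ^ j :=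
      pow_le_pow_of_le_one (by norm_num) (by norm_num) hjk
    simp only [htdef]
    exact mul_le_mul_of_nonneg_left h4 hspos.le
  have htlast : t (n + 1) = 16 * r := by
    simp only [htdef, hsdef]
    rw [mul_assoc, ← mul_pow]
    norm_num
  have htbig : ∀ j, j ≤ n + 1 → 16 * r ≤ t j := fun j hj => htlast ▸ htmono j (n + 1) hj
  have ht10 : t 1 < t 0 := by
    rw [htsucc 0]
    have := htpos 0
    linarith
  set φ : Set X → X → ℝ := fun u x => s - Metric.infDist x u with hφdef
  have hLip : ∀ u : Set X, ∀ x y : X, φ u x ≤ φ u y + dist x y := by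
    intro u x y
    have h := Metric.infDist_le_infDist_add_dist (s := u) (x := y) (y := x)
    rw [dist_comm y x] at h
    simp only [hφdef]
    linarith
  set S : X → Set (Set X) := fun x => {u ∈ U | (u ∩ Metric.ball x s).Nonempty} with hSdef
  have hSfin : ∀ x, (S x).Finite := fun x => (hmult x).1
  have hScard : ∀ x, (S x).ncard ≤ n + 1 := fun x => (hmult x).2
  have hSmem : ∀ (x : X) (u : Set X), u ∈ S x ↔ u ∈ U ∧ u.Nonempty ∧ 0 < φ u x := by
    intro x u
    simp only [hSdef, mem_setOf_eq, hφdef, sub_pos]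
    constructor
    · rintro ⟨hU, y, hyu, hyb⟩
      refine ⟨hU, ⟨y, hyu⟩, ?_⟩
      calc Metric.infDist x u ≤ dist x y := Metric.infDist_le_dist_of_mem hyu
        _ < s := by rw [dist_comm]; exact mem_ball.1 hyb
    · rintro ⟨hU, hne, hlt⟩
      obtain ⟨y, hyu, hyd⟩ := (Metric.infDist_lt_iff hne).1 hlt
      exact ⟨hU, y, hyu, mem_ball.2 (by rw [dist_comm]; exact hyd)⟩
  have hmemC : ∀ x : X, ∃ u₀, u₀ ∈ U ∧ x ∈ u₀ := by
    intro x
    have hx : x ∈ ⋃₀ U := by rw [hcover]; trivial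
    obtain ⟨u₀, h1, h2⟩ := mem_sUnion.1 hx
    exact ⟨u₀, h1, h2⟩
  have hφ₀ : ∀ (x : X) (u₀ : Set X), x ∈ u₀ → φ u₀ x = s := by
    intro x u₀ hx
    simp [hφdef, Metric.infDist_zero_of_mem hx]
  have hJ : ∀ x : X, ∃ j, 1 ≤ j ∧ j ≤ n + 1 ∧
      ∀ u ∈ S x, φ u x ≤ t (j + 1) ∨ t j < φ u x := by
    intro x
    obtain ⟨u₀, hu₀U, hxu₀⟩ := hmemC x
    have hu₀S : u₀ ∈ S x := (hSmem x u₀).2 ⟨hu₀U, ⟨x, hxu₀⟩, by rw [hφ₀ x u₀ hxu₀]; exact hspos⟩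
    by_contra hcon
    push_neg at hcon
    have hcon' : ∀ j : ℕ, ∃ u : Set X, 1 ≤ j → j ≤ n + 1 →
        u ∈ S x ∧ t (j + 1) < φ u x ∧ φ u x ≤ t j := by
      intro j
      by_cases h1 : 1 ≤ j ∧ j ≤ n + 1
      · obtain ⟨u, hu1, hu2⟩ := hcon j h1.1 h1.2
        exact ⟨u, fun _ _ => ⟨hu1, hu2⟩⟩
      · exact ⟨∅, fun ha hb => absurd ⟨ha, hb⟩ h1⟩
    choose g hg using hcon'
    have hkey : ∀ j ∈ Finset.Icc 1 (n + 1), ∀ k ∈ Finset.Icc 1 (n + 1), j < k → g j ≠ g k := by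
      intro j hj k hk hjk heq
      rw [Finset.mem_Icc] at hj hk
      obtain ⟨_, h2j, _⟩ := hg j hj.1 hj.2
      obtain ⟨_, _, h3k⟩ := hg k hk.1 hk.2
      have hle : t k ≤ t (j + 1) := htmono _ _ hjk
      rw [← heq] at h3k
      linarith
    have hmap : ∀ j ∈ Finset.Icc 1 (n + 1), g j ∈ (hSfin x).toFinset.erase u₀ := by
      intro j hj
      rw [Finset.mem_Icc] at hj
      obtain ⟨h1, h2, h3⟩ := hg j hj.1 hj.2
      rw [Finset.mem_erase, Set.Finite.mem_toFinset]
      refine ⟨?_, h1⟩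
      intro heq
      rw [heq, hφ₀ x u₀ hxu₀] at h3
      have hle : t j ≤ t 1 := htmono 1 j hj.1
      rw [ht0] at ht10
      linarith
    have hinj : Set.InjOn g ↑(Finset.Icc 1 (n + 1)) := by
      intro j hj k hk heq
      by_contra hne
      rcases lt_or_gt_of_ne hne with hlt | hlt
      · exact hkey j (by exact_mod_cast hj) k (by exact_mod_cast hk) hlt heq
      · exact hkey k (by exact_mod_cast hk) j (by exact_mod_cast hj) hlt heq.symm
    have hcard := Finset.card_le_card_of_injOn g hmap hinj
    rw [Nat.card_Icc] at hcard
    have h1 : ((hSfin x).toFinset.erase u₀).card = (hSfin x).toFinset.card - 1 :=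
      Finset.card_erase_of_mem (by rw [Set.Finite.mem_toFinset]; exact hu₀S)
    have h2 : (hSfin x).toFinset.card = (S x).ncard := (Set.ncard_eq_toFinset_card _ (hSfin x)).symm
    have h3 := hScard x
    rw [h1] at hcard
    omega
  clear_value s t φ S
  choose jx hj1 hj2 hgap using hJ
  set F : X → Set (Set X) := fun x => {u ∈ S x | t (jx x) < φ u x} with hFdef
  have hFsub : ∀ x, F x ⊆ S x := fun x => sep_subset _ _
  have hFfin : ∀ x, (F x).Finite := fun x => (hSfin x).subset (hFsub x)
  have hFne : ∀ x, (F x).Nonempty := by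
    intro x
    obtain ⟨u₀, hu₀U, hxu₀⟩ := hmemC x
    have hu₀S : u₀ ∈ S x := (hSmem x u₀).2 ⟨hu₀U, ⟨x, hxu₀⟩, by rw [hφ₀ x u₀ hxu₀]; exact hspos⟩
    refine ⟨u₀, hu₀S, ?_⟩
    rw [hφ₀ x u₀ hxu₀]
    have h1 : t (jx x) ≤ t 1 := htmono 1 (jx x) (hj1 x)
    rw [ht0] at ht10
    linarith
  have hFcard1 : ∀ x, 1 ≤ (F x).ncard := fun x => (Set.ncard_pos (hFfin x)).2 (hFne x)
  have hFcard2 : ∀ x, (F x).ncard ≤ n + 1 := fun x =>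
    le_trans (Set.ncard_le_ncard (hFsub x) (hSfin x)) (hScard x)
  set χ : X → Fin (n + 1) := fun x => ⟨(F x).ncard - 1, by have := hFcard2 x; omega⟩ with hχdef
  have hsub : ∀ x y : X, dist x y ≤ r → jx x ≤ jx y → F x ⊆ F y := by
    intro x y hxy hjk u hu
    obtain ⟨huS, huφ⟩ := hu
    obtain ⟨huU, hune, huφx⟩ := (hSmem x u).1 huS
    have h16x : 16 * r ≤ t (jx x) := htbig _ (hj2 x)
    have h16y : 16 * r ≤ t (jx y) := htbig _ (hj2 y)
    have hφy : φ u x - r ≤ φ u y := by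
      have := hLip u x y
      linarith
    rcases eq_or_lt_of_le hjk with heq | hlt
    · have h1 : t (jx y + 1) < φ u y := by
        rw [← heq, htsucc]
        have ht := htpos (jx x)
        nlinarith [huφ, hφy, h16x, hr, ht]
      have huSy : u ∈ S y := (hSmem y u).2 ⟨huU, hune, lt_trans (htpos _) h1⟩
      rcases hgap y u huSy with hcase | hcase
      · linarith
      · exact ⟨huSy, hcase⟩
    · have h4 : t (jx y) ≤ t (jx x + 1) := htmono _ _ hlt
      rw [htsucc] at h4
      have hy' : t (jx y) < φ u y := by linarith
      exact ⟨(hSmem y u).2 ⟨huU, hune, lt_trans (htpos _) hy'⟩, hy'⟩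
  have hstab : ∀ x y : X, dist x y ≤ r → χ x = χ y → F x = F y := by
    intro x y hxy hc
    have hcval := congrArg Fin.val hc
    simp only [hχdef] at hcval
    have hc1 := hFcard1 x
    have hc2 := hFcard1 y
    have hcard : (F x).ncard = (F y).ncard := by omega
    rcases le_total (jx x) (jx y) with hle | hle
    · exact Set.eq_of_subset_of_ncard_le (hsub x y hxy hle) hcard.ge (hFfin y)
    · exact (Set.eq_of_subset_of_ncard_le (hsub y x (by rwa [dist_comm]) hle) hcard.le
        (hFfin x)).symm
  refine ⟨2 * s + D, by linarith, χ, ?_⟩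
  intro l hchain hmono
  cases l with
  | nil =>
    have : {x : X | x ∈ ([] : List X)} = ∅ := by simp
    rw [this, show EMetric.diam (∅ : Set X) = 0 from Metric.ediam_empty]
    exact zero_le
  | cons a tl =>
    have hFchain : (a :: tl).Chain' (fun p q => F p = F q) := by
      rw [List.Chain', List.isChain_iff_getElem]
      intro i hilen
      have h1 := List.isChain_iff_getElem.1 hchain i hilen
      exact hstab _ _ h1 (hmono _ (List.getElem_mem _) _ (List.getElem_mem _))
    have hFc : ∀ p ∈ a :: tl, F a = F p := chain'_head_eq F tl a hFchain
    obtain ⟨u, huF⟩ := hFne a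
    have huU : u ∈ U := ((hSmem a u).1 huF.1).1
    have hune : u.Nonempty := ((hSmem a u).1 huF.1).2.1
    have hmemD : ∀ p ∈ a :: tl, Metric.infDist p u < s := by
      intro p hp
      have hup : u ∈ F p := (hFc p hp) ▸ huF
      have h0 : 0 < φ u p := ((hSmem p u).1 hup.1).2.2
      simp only [hφdef, sub_pos] at h0
      exact h0
    have hDnn : (0 : ℝ) ≤ D := hD.le
    apply EMetric.diam_le
    intro p hp q hq
    have hp' : p ∈ a :: tl := hp
    have hq' : q ∈ a :: tl := hq
    obtain ⟨yp, hyp, hdp⟩ := (Metric.infDist_lt_iff hune).1 (hmemD p hp')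
    obtain ⟨yq, hyq, hdq⟩ := (Metric.infDist_lt_iff hune).1 (hmemD q hq')
    have hyd : dist yp yq ≤ D := by
      have h1 := EMetric.edist_le_diam_of_mem hyp hyq
      have h2 := le_trans h1 (hdiam u huU)
      rw [edist_dist] at h2
      exact (ENNReal.ofReal_le_ofReal_iff hDnn).1 h2
    have hfin : dist p q ≤ 2 * s + D := by
      have h3 := dist_triangle4 p yp yq q
      have h4 : dist yq q = dist q yq := dist_comm _ _
      linarith
    rw [edist_dist]
    exact ENNReal.ofReal_le_ofReal hfin

private lemma chain'_const {α β : Type*} (f : α → β) (l : List α)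
    (h : l.Chain' fun x y => f x = f y) : ∀ p ∈ l, ∀ q ∈ l, f p = f q := by
  cases l with
  | nil => simp
  | cons a tl =>
    intro p hp q hq
    exact (chain'_head_eq f tl a h p hp).symm.trans (chain'_head_eq f tl a h q hq)

private lemma rtg_list {X : Type*} {R : X → X → Prop} {a b : X}
    (h : Relation.ReflTransGen R a b) :
    ∃ l : List X, l.Chain' R ∧ a ∈ l ∧ l.getLast? = some b := by
  induction h with
  | refl => exact ⟨[a], List.isChain_singleton a, List.mem_singleton_self a, rfl⟩
  | @tail b c hab hbc ih =>
    obtain ⟨l, h1, h2, h3⟩ := ih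
    refine ⟨l ++ [c], ?_, List.mem_append_left _ h2, List.getLast?_concat⟩
    rw [List.Chain', List.isChain_append]
    refine ⟨h1, List.isChain_singleton c, ?_⟩
    intro x hx y hy
    simp at hy
    rw [h3] at hx
    simp at hx
    subst hx; subst hy
    exact hbc

private lemma coloring_to_asdim {X : Type*} [MetricSpace X] (n : ℕ)
    (H : ∀ r > (0 : ℝ), ∃ D > (0 : ℝ), ∃ χ : X → Fin (n + 1),
        ∀ l : List X, IsRChain r l → Monochrome χ l →
          EMetric.diam {x | x ∈ l} ≤ ENNReal.ofReal D) :
    AsdimLE X n := by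
  classical
  intro r hr
  obtain ⟨D, hD, χ, hχ⟩ := H (2 * r) (by linarith)
  set R : X → X → Prop := fun a b => χ a = χ b ∧ dist a b ≤ 2 * r with hRdef
  have hRsymm : Symmetric R := fun a b h => ⟨h.1.symm, by rw [dist_comm]; exact h.2⟩
  set E : X → X → Prop := Relation.ReflTransGen R with hEdef
  have hEsymm : ∀ a b, E a b → E b a := fun a b h =>
    @Std.Symm.symm _ _ (@Relation.ReflTransGen.stdSymm _ R ⟨fun x y hxy => hRsymm hxy⟩) a b h
  have hEdist : ∀ a b, E a b → edist a b ≤ ENNReal.ofReal D := by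
    intro a b h
    obtain ⟨l, hl, hal, hbl⟩ := rtg_list h
    have hchain : IsRChain (2 * r) l := List.IsChain.imp (fun a b h => h.2) hl
    have hmono : Monochrome χ l := chain'_const χ l (List.IsChain.imp (fun a b h => h.1) hl)
    have hb : b ∈ l := by
      cases l with
      | nil => simp at hbl
      | cons c t =>
        rw [List.getLast?_eq_getLast (l := c :: t) (by simp)] at hbl
        have h2 := List.getLast_mem (l := c :: t) (by simp)
        rw [Option.some_inj] at hbl
        rwa [hbl] at h2
    have h1 : a ∈ {x | x ∈ l} := hal
    have h2 : b ∈ {x | x ∈ l} := hb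
    exact le_trans (EMetric.edist_le_diam_of_mem h1 h2) (hχ l hchain hmono)
  refine ⟨D, hD, {C | ∃ a : X, C = {b | E a b}}, ?_, ?_, ?_⟩
  · ext x
    simp only [mem_sUnion, mem_univ, iff_true, mem_setOf_eq]
    exact ⟨{b | E x b}, ⟨x, rfl⟩, Relation.ReflTransGen.refl⟩
  · rintro u ⟨a, rfl⟩
    apply EMetric.diam_le
    intro y hy z hz
    exact hEdist y z ((hEsymm a y hy).trans hz)
  · intro x
    set M := {u ∈ {C | ∃ a : X, C = {b | E a b}} | (u ∩ Metric.ball x r).Nonempty} with hM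
    set f : Set X → Fin (n + 1) := fun C =>
      if h : (C ∩ Metric.ball x r).Nonempty then χ h.choose else 0 with hf
    have hinj : Set.InjOn f M := by
      rintro C₁ ⟨⟨a₁, rfl⟩, hne₁⟩ C₂ ⟨⟨a₂, rfl⟩, hne₂⟩ hfeq
      simp only [hf, dif_pos hne₁, dif_pos hne₂] at hfeq
      obtain ⟨hy₁C, hy₁b⟩ := hne₁.choose_spec
      obtain ⟨hy₂C, hy₂b⟩ := hne₂.choose_spec
      have hy12 : R hne₁.choose hne₂.choose := by
        refine ⟨hfeq, ?_⟩
        have h1 := mem_ball.1 hy₁b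
        have h2 := mem_ball.1 hy₂b
        have := dist_triangle hne₁.choose x hne₂.choose
        rw [dist_comm x hne₂.choose] at this
        linarith
      have hE12 : E a₁ a₂ :=
        (hy₁C.trans (Relation.ReflTransGen.single hy12)).trans (hEsymm _ _ hy₂C)
      ext b
      exact ⟨fun h => (hEsymm _ _ hE12).trans h, fun h => hE12.trans h⟩
    constructor
    · exact Set.Finite.of_finite_image (Set.toFinite _) hinj
    · calc M.ncard = (f '' M).ncard := (Set.ncard_image_of_injOn hinj).symm
        _ ≤ (univ : Set (Fin (n + 1))).ncard :=
            Set.ncard_le_ncard (subset_univ _) finite_univ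
        _ = n + 1 := by simp [Set.ncard_univ]


theorem asdim_iff_coloring {X : Type*} [MetricSpace X] (n : ℕ) :
    AsdimLE X n ↔
      ∀ r > (0 : ℝ), ∃ D > (0 : ℝ), ∃ χ : X → Fin (n + 1),
        ∀ l : List X, IsRChain r l → Monochrome χ l →
          EMetric.diam {x | x ∈ l} ≤ ENNReal.ofReal D := by
  exact ⟨fun h => asdim_to_coloring n h, fun h => coloring_to_asdim n h⟩
end

section
/- Let X be a metric space and n ∈ ℕ. Then asdim(X) ≤ n if and only if for every r > 0 there exists D > 0 such that for every finite subset F ⊆ X there is a coloring χ : F → Fin (n+1) such that every χ-monochrome r-chain C ⊆ F has diameter at most D. -/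
open Metric Set

lemma chain_head {X : Type*} [MetricSpace X] {r : ℝ} (hr : 0 ≤ r) {l : List X}
    (hl : IsRChain r l) {y : X} (hy : y ∈ l) :
    ∃ l' : List X, IsRChain r l' ∧ l'.head? = some y ∧ (∀ z, z ∈ l' ↔ z ∈ l) := by
  obtain ⟨a, b, rfl⟩ := List.append_of_mem hy
  have h1 : IsRChain r a ∧ IsRChain r (y :: b) ∧
      ∀ p ∈ a.getLast?, ∀ q ∈ (y :: b).head?, dist p q ≤ r := List.isChain_append.1 hl
  have hay : IsRChain r (a ++ [y]) := by
    refine List.isChain_append.2 ⟨h1.1, List.isChain_singleton y, ?_⟩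
    intro p hp q hq
    simp only [List.head?_cons, Option.mem_def, Option.some.injEq] at hq
    subst hq
    exact h1.2.2 p hp y (by simp)
  have hrev : IsRChain r (a ++ [y]).reverse := by
    rw [IsRChain]; refine List.isChain_reverse.2 ?_
    exact hay.imp (fun a b h => show dist b a ≤ r by rwa [dist_comm])
  refine ⟨(a ++ [y]).reverse ++ ((a ++ [y]) ++ (y :: b)), ?_, ?_, ?_⟩
  · refine List.isChain_append.2 ⟨hrev, ?_, ?_⟩
    · refine List.isChain_append.2 ⟨hay, h1.2.1, ?_⟩
      intro p hp q hq
      rw [List.getLast?_concat] at hp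
      simp only [Option.mem_def, Option.some.injEq, List.head?_cons] at hp hq
      subst hp; subst hq
      simpa using hr
    · intro p hp q hq
      rw [List.getLast?_reverse] at hp
      have : ((a ++ [y]) ++ (y :: b)).head? = (a ++ [y]).head? := by
        cases a <;> simp
      rw [this] at hq
      simp only [Option.mem_def] at hp hq
      rw [hp] at hq
      cases hq
      simpa using hr
  · simp [List.head?_reverse]
  · intro z; simp; tauto

lemma exists_global_coloring {X : Type*} [MetricSpace X] {n : ℕ} {r D : ℝ}
    (h : ∀ F : Set X, F.Finite → ∃ χ : X → Fin (n + 1),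
      ∀ l : List X, (∀ x ∈ l, x ∈ F) → IsRChain r l → Monochrome χ l →
        EMetric.diam {x | x ∈ l} ≤ ENNReal.ofReal D) :
    ∃ χ : X → Fin (n + 1), ∀ l : List X, IsRChain r l → Monochrome χ l →
      EMetric.diam {x | x ∈ l} ≤ ENNReal.ofReal D := by
  classical
  let C : Finset X → Set (X → Fin (n + 1)) := fun F =>
    {χ | ∀ l : List X, (∀ x ∈ l, x ∈ F) → IsRChain r l → Monochrome χ l →
        EMetric.diam {x | x ∈ l} ≤ ENNReal.ofReal D}
  have hne : ∀ F, (C F).Nonempty := by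
    intro F
    obtain ⟨χ, hχ⟩ := h (↑F) F.finite_toSet
    exact ⟨χ, fun l hl => hχ l (fun x hx => by exact_mod_cast hl x hx)⟩
  have hdir : Directed (· ⊇ ·) C := by
    intro F G
    refine ⟨F ∪ G, fun χ hχ l hl => hχ l fun x hx => Finset.mem_union_left _ (hl x hx),
      fun χ hχ l hl => hχ l fun x hx => Finset.mem_union_right _ (hl x hx)⟩
  have hclosed : ∀ F, IsClosed (C F) := by
    intro F
    rw [← isOpen_compl_iff, isOpen_iff_mem_nhds]
    intro χ hχ
    have hopen : IsOpen {χ' : X → Fin (n + 1) | ∀ x ∈ F, χ' x = χ x} := by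
      have heq : {χ' : X → Fin (n + 1) | ∀ x ∈ F, χ' x = χ x}
          = ⋂ x ∈ F, (fun χ' : X → Fin (n + 1) => χ' x) ⁻¹' {χ x} := by
        ext χ'; simp
      rw [heq]
      exact isOpen_biInter_finset fun x _ =>
        (continuous_apply x).isOpen_preimage _ (isOpen_discrete _)
    filter_upwards [hopen.mem_nhds (fun x _ => rfl)] with χ' hagree
    intro hmem
    apply hχ
    intro l hl hchain hmono
    refine hmem l hl hchain ?_
    intro x hx y hy
    rw [hagree x (hl x hx), hagree y (hl y hy)]
    exact hmono x hx y hy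
  obtain ⟨χ, hχ⟩ := IsCompact.nonempty_iInter_of_directed_nonempty_isCompact_isClosed C hdir hne
    (fun F => (hclosed F).isCompact) hclosed
  refine ⟨χ, fun l hl hm => ?_⟩
  exact (mem_iInter.1 hχ l.toFinset) l (fun x hx => List.mem_toFinset.2 hx) hl hm

lemma asdim_forward {X : Type*} [MetricSpace X] (n : ℕ) (h : AsdimLE X n) :
    ∀ r > (0 : ℝ), ∃ D > (0 : ℝ), ∀ F : Set X, F.Finite →
        ∃ χ : X → Fin (n + 1),
          ∀ l : List X, (∀ x ∈ l, x ∈ F) → IsRChain r l → Monochrome χ l →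
            EMetric.diam {x | x ∈ l} ≤ ENNReal.ofReal D := by
  classical
  intro r hr
  set s : ℝ := 6 * r * (n + 2) with hs
  have hspos : 0 < s := by positivity
  obtain ⟨D, hD, U, hcover, hdiam, hmult⟩ := h s hspos
  refine ⟨D + s, by linarith, fun F _ => ?_⟩
  set f : Set X → X → ℝ := fun u x => s / 3 - Metric.infDist x u with hf
  set S : X → ℕ → Set (Set X) :=
    fun x j => {u | u ∈ U ∧ u.Nonempty ∧ 2 * r * j < f u x} with hS
  have hlip : ∀ (u : Set X) (x y : X), f u x - dist x y ≤ f u y := by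
    intro u x y
    have h1 : Metric.infDist y u ≤ Metric.infDist x u + dist y x :=
      Metric.infDist_le_infDist_add_dist
    rw [dist_comm y x] at h1
    simp only [hf]
    linarith
  have hanti : ∀ x : X, ∀ {j k : ℕ}, j ≤ k → S x k ⊆ S x j := by
    intro x j k hjk u hu
    refine ⟨hu.1, hu.2.1, lt_of_le_of_lt ?_ hu.2.2⟩
    have hc : (j : ℝ) ≤ (k : ℝ) := by exact_mod_cast hjk
    nlinarith
  have htop : ∀ x, (S x (n + 1)).Nonempty := by
    intro x
    have hx : x ∈ ⋃₀ U := by rw [hcover]; trivial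
    obtain ⟨u, huU, hxu⟩ := hx
    refine ⟨u, huU, ⟨x, hxu⟩, ?_⟩
    have h0 : Metric.infDist x u = 0 := Metric.infDist_zero_of_mem hxu
    simp only [hf, h0, sub_zero, hs]
    push_cast
    nlinarith
  have hS0 : ∀ x, (S x 0).Finite ∧ (S x 0).ncard ≤ n + 1 := by
    intro x
    have hsub : S x 0 ⊆ {u ∈ U | (u ∩ Metric.ball x s).Nonempty} := by
      rintro u ⟨huU, hne, hfu⟩
      have h1 : Metric.infDist x u < s := by
        simp only [hf] at hfu
        push_cast at hfu
        linarith
      obtain ⟨y, hyu, hxy⟩ := (Metric.infDist_lt_iff hne).1 h1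
      exact ⟨huU, y, hyu, by rwa [mem_ball, dist_comm]⟩
    exact ⟨(hmult x).1.subset hsub,
      le_trans (Set.ncard_le_ncard hsub (hmult x).1) (hmult x).2⟩
  have hpigeon : ∀ x : X, ∃ j : ℕ, j ≤ n ∧ S x j = S x (j + 1) := by
    intro x
    by_contra hcon
    push_neg at hcon
    have hstrict : ∀ j : ℕ, j ≤ n → S x (j + 1) ⊂ S x j := fun j hj =>
      HasSubset.Subset.ssubset_of_ne (hanti x (Nat.le_succ j))
        (fun e => hcon j hj e.symm)
    have hcard : ∀ j : ℕ, j ≤ n + 1 → (S x j).ncard + j ≤ (S x 0).ncard := by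
      intro j
      induction j with
      | zero => intro _; simp
      | succ k ih =>
        intro hk
        have hk' : k ≤ n := by omega
        have h1 : (S x (k + 1)).ncard < (S x k).ncard :=
          Set.ncard_lt_ncard (hstrict k hk') ((hS0 x).1.subset (hanti x (Nat.zero_le k)))
        have h2 := ih (by omega)
        omega
    have h1 := hcard (n + 1) le_rfl
    have hfinn : (S x (n + 1)).Finite := (hS0 x).1.subset (hanti x (Nat.zero_le _))
    have h2 : 0 < (S x (n + 1)).ncard := (Set.ncard_pos hfinn).2 (htop x)
    have h3 := (hS0 x).2
    omega
  choose jx hjxle hjxeq using hpigeon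
  refine ⟨fun x => ⟨jx x, Nat.lt_succ_of_le (hjxle x)⟩, ?_⟩
  have hhalf : ∀ a b : X, dist a b ≤ r → jx a = jx b →
      S a (jx a + 1) ⊆ S b (jx a + 1) := by
    intro a b hab hjab u hu
    have h1 : 2 * r * ((jx a : ℝ) + 1) < f u a := by
      have := hu.2.2
      push_cast at this
      linarith
    have h2 : f u a - dist a b ≤ f u b := hlip u a b
    have h3 : 2 * r * (jx a : ℝ) < f u b := by nlinarith
    have hub : u ∈ S b (jx a) := ⟨hu.1, hu.2.1, h3⟩
    rw [hjab] at hub ⊢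
    rw [← hjxeq b]
    exact hub
  have hstep : ∀ x y : X, dist x y ≤ r → jx x = jx y →
      S x (jx x + 1) = S y (jx x + 1) := by
    intro x y hxy hj
    refine Set.Subset.antisymm (hhalf x y hxy hj) ?_
    have := hhalf y x (by rwa [dist_comm]) hj.symm
    rw [← hj] at this
    exact this
  have hchain : ∀ (t : List X) (x : X), List.Chain' (fun a b => dist a b ≤ r) (x :: t) →
      (∀ y ∈ x :: t, jx y = jx x) → ∀ y ∈ x :: t, S y (jx x + 1) = S x (jx x + 1) := by
    intro t
    induction t with
    | nil =>
      intro x _ _ y hy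
      simp only [List.mem_singleton] at hy
      subst hy; rfl
    | cons b t ih =>
      intro x hch hcol y hy
      have hxb : dist x b ≤ r := (List.isChain_cons_cons.1 hch).1
      have hch' := (List.isChain_cons_cons.1 hch).2
      have hjb : jx b = jx x := hcol b (by simp)
      have hSbx : S b (jx x + 1) = S x (jx x + 1) := (hstep x b hxb hjb.symm).symm
      rcases List.mem_cons.1 hy with rfl | hy'
      · rfl
      · have hcol' : ∀ z ∈ b :: t, jx z = jx b := by
          intro z hz
          rw [hjb]
          exact hcol z (List.mem_cons.2 (Or.inr hz))
        have := ih b hch' hcol' y hy'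
        rw [hjb] at this
        rw [this, hSbx]
  intro l hlF hlr hmono
  cases l with
  | nil =>
    apply EMetric.diam_le
    intro y hy
    simp at hy
  | cons x t =>
    have hxmem : x ∈ x :: t := List.mem_cons_self
    have hcol : ∀ y ∈ x :: t, jx y = jx x := by
      intro y hy
      have := hmono y hy x hxmem
      exact congrArg Fin.val this
    have hSc := hchain t x hlr hcol
    obtain ⟨u, hu⟩ := htop x
    have huu : u ∈ S x (jx x + 1) := hanti x (Nat.succ_le_succ (hjxle x)) hu
    have hinf : ∀ y ∈ x :: t, ∃ p ∈ u, dist y p < s / 3 := by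
      intro y hy
      have huy : u ∈ S y (jx x + 1) := by rw [hSc y hy]; exact huu
      have h1 : Metric.infDist y u < s / 3 := by
        have h2 := huy.2.2
        simp only [hf] at h2
        have h3 : (0:ℝ) ≤ 2 * r * ((jx x : ℝ) + 1) := by positivity
        push_cast at h2
        linarith
      exact (Metric.infDist_lt_iff huy.2.1).1 h1
    apply EMetric.diam_le
    intro y hy z hz
    obtain ⟨p, hpu, hyp⟩ := hinf y hy
    obtain ⟨q, hqu, hzq⟩ := hinf z hz
    calc edist y z ≤ edist y p + edist p z := edist_triangle _ _ _
      _ ≤ edist y p + (edist p q + edist q z) := by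
          exact add_le_add le_rfl (edist_triangle _ _ _)
      _ ≤ ENNReal.ofReal (s / 3) + (ENNReal.ofReal D + ENNReal.ofReal (s / 3)) := by
          gcongr
          · rw [edist_dist]
            exact ENNReal.ofReal_le_ofReal hyp.le
          · exact le_trans (EMetric.edist_le_diam_of_mem hpu hqu) (hdiam u huu.1)
          · rw [edist_dist]
            exact ENNReal.ofReal_le_ofReal (by rw [dist_comm]; exact hzq.le)
      _ = ENNReal.ofReal (s / 3 + (D + s / 3)) := by
          rw [ENNReal.ofReal_add (by linarith) (by linarith),
            ENNReal.ofReal_add (by linarith) (by linarith)]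
      _ ≤ ENNReal.ofReal (D + s) := ENNReal.ofReal_le_ofReal (by linarith)

lemma asdim_backward {X : Type*} [MetricSpace X] (n : ℕ)
    (h : ∀ r > (0 : ℝ), ∃ D > (0 : ℝ), ∀ F : Set X, F.Finite →
        ∃ χ : X → Fin (n + 1),
          ∀ l : List X, (∀ x ∈ l, x ∈ F) → IsRChain r l → Monochrome χ l →
            EMetric.diam {x | x ∈ l} ≤ ENNReal.ofReal D) :
    AsdimLE X n := by
  classical
  intro r hr
  obtain ⟨D, hD, hFc⟩ := h (2 * r) (by linarith)
  obtain ⟨χ, hχ⟩ := exists_global_coloring hFc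
  set Rel : X → X → Prop := fun x y =>
    ∃ l : List X, IsRChain (2 * r) l ∧ (∀ z ∈ l, χ z = χ x) ∧ x ∈ l ∧ y ∈ l with hRel
  have hrefl : ∀ x, Rel x x := fun x => ⟨[x], List.isChain_singleton x, by simp, by simp, by simp⟩
  have hsymm : ∀ {x y}, Rel x y → Rel y x := by
    rintro x y ⟨l, hl, hc, hx, hy⟩
    exact ⟨l, hl, fun z hz => (hc z hz).trans (hc y hy).symm, hy, hx⟩
  have htrans : ∀ {x y w}, Rel x y → Rel y w → Rel x w := by
    rintro x y w ⟨l₁, hl₁, hc₁, hx₁, hy₁⟩ ⟨l₂, hl₂, hc₂, hy₂, hw₂⟩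
    obtain ⟨l₁', h₁', hh₁, hm₁⟩ := chain_head (by linarith) hl₁ hy₁
    obtain ⟨l₂', h₂', hh₂, hm₂⟩ := chain_head (by linarith) hl₂ hy₂
    refine ⟨l₁'.reverse ++ l₂', ?_, ?_, ?_, ?_⟩
    · refine List.isChain_append.2 ⟨?_, h₂', ?_⟩
      · exact List.isChain_reverse.2 (h₁'.imp fun a b hab => show dist b a ≤ 2*r by rwa [dist_comm])
      · intro p hp q hq
        rw [List.getLast?_reverse, hh₁] at hp
        rw [hh₂] at hq
        simp only [Option.mem_def, Option.some.injEq] at hp hq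
        subst hp; subst hq; simp; linarith
    · intro z hz
      rcases List.mem_append.1 hz with hz | hz
      · exact hc₁ z ((hm₁ z).1 (List.mem_reverse.1 hz))
      · exact ((hc₂ z ((hm₂ z).1 hz)).trans (hc₁ y hy₁))
    · exact List.mem_append.2 (Or.inl (List.mem_reverse.2 ((hm₁ x).2 hx₁)))
    · exact List.mem_append.2 (Or.inr ((hm₂ w).2 hw₂))
  have hCeq : ∀ {x y}, Rel x y → {z | Rel x z} = {z | Rel y z} := by
    intro x y hxy
    ext z
    exact ⟨fun hz => htrans (hsymm hxy) hz, fun hz => htrans hxy hz⟩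
  have hclose : ∀ {p q : X}, dist p q < 2 * r → χ p = χ q → Rel p q := by
    intro p q hpq hc
    refine ⟨[p, q], ?_, ?_, by simp, by simp⟩
    · exact List.isChain_pair.2 hpq.le
    · intro z hz
      simp only [List.mem_cons, List.mem_singleton, List.not_mem_nil, or_false] at hz
      rcases hz with rfl | rfl
      · rfl
      · exact hc.symm
  set C : X → Set X := fun x => {z | Rel x z} with hC
  refine ⟨D, hD, range C, ?_, ?_, ?_⟩
  · apply eq_univ_of_forall
    intro x
    exact ⟨C x, ⟨x, rfl⟩, hrefl x⟩
  · rintro u ⟨x, rfl⟩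
    apply EMetric.diam_le
    intro y hy z hz
    have hyz : Rel y z := htrans (hsymm hy) hz
    obtain ⟨l, hl, hc, hyl, hzl⟩ := hyz
    have hb := hχ l hl (fun a ha b hb => (hc a ha).trans (hc b hb).symm)
    exact le_trans (EMetric.edist_le_diam_of_mem (show y ∈ {x | x ∈ l} from hyl)
      (show z ∈ {x | x ∈ l} from hzl)) hb
  · intro x
    set T := {u ∈ range C | (u ∩ Metric.ball x r).Nonempty} with hT
    have hmemT : ∀ u ∈ T, ∃ p, u = C p ∧ p ∈ u ∩ Metric.ball x r := by
      rintro u ⟨⟨q, rfl⟩, ⟨p, hp⟩⟩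
      exact ⟨p, hCeq hp.1, hp⟩
    choose pt hpt hptmem using hmemT
    set g : Set X → Fin (n + 1) := fun u => if h : u ∈ T then χ (pt u h) else 0 with hg
    have hginj : InjOn g T := by
      intro u hu v hv huv
      simp only [hg, dif_pos hu, dif_pos hv] at huv
      have hpu := hptmem u hu
      have hpv := hptmem v hv
      rw [mem_inter_iff, mem_ball] at hpu hpv
      have hdist : dist (pt u hu) (pt v hv) < 2 * r := by
        calc dist (pt u hu) (pt v hv) ≤ dist (pt u hu) x + dist x (pt v hv) := dist_triangle _ _ _
          _ < r + r := by
              rw [dist_comm x (pt v hv)]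
              exact add_lt_add hpu.2 hpv.2
          _ = 2 * r := by ring
      have hrel := hclose hdist huv
      rw [hpt u hu, hpt v hv]
      exact hCeq hrel
    have hgfin : (g '' T).Finite := Set.Finite.subset (Set.finite_univ) (subset_univ _)
    have hfin : T.Finite := Set.Finite.of_finite_image hgfin hginj
    refine ⟨hfin, ?_⟩
    calc T.ncard = (g '' T).ncard := (Set.ncard_image_of_injOn hginj).symm
      _ ≤ (univ : Set (Fin (n + 1))).ncard := Set.ncard_le_ncard (subset_univ _) finite_univ
      _ = n + 1 := by simp [Set.ncard_univ]

theorem asdim_iff_finite_colorings {X : Type*} [MetricSpace X] (n : ℕ) :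
    AsdimLE X n ↔
      ∀ r > (0 : ℝ), ∃ D > (0 : ℝ), ∀ F : Set X, F.Finite →
        ∃ χ : X → Fin (n + 1),
          ∀ l : List X, (∀ x ∈ l, x ∈ F) → IsRChain r l → Monochrome χ l →
            EMetric.diam {x | x ∈ l} ≤ ENNReal.ofReal D :=
  ⟨asdim_forward n, asdim_backward n⟩
end

section
/- Let X be a metric space and n ∈ ℕ. Then asdim(X) ≤ n if and only if for every r > 0 there exists D > 0 such that for every finite r-connected subset F ⊆ X there is a coloring χ : F → Fin (n+1) such that every χ-monochrome r-chain C ⊆ F has diameter at most D. -/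
open Metric Set

/-- A subset `F` is `r`-connected if any two of its points are joined by an `r`-chain in `F`. -/
def IsRConnected {X : Type*} [MetricSpace X] (r : ℝ) (F : Set X) : Prop :=
  ∀ x ∈ F, ∀ y ∈ F, ∃ l : List X, (∀ z ∈ l, z ∈ F) ∧ IsRChain r l ∧
    l.head? = some x ∧ l.getLast? = some y


section AuxChains

variable {X : Type*} [MetricSpace X]

private lemma chain'_with {R S : X → X → Prop} :
    ∀ l : List X, (∀ u ∈ l, ∀ v ∈ l, S u v) → l.Chain' R →
      l.Chain' (fun u v => R u v ∧ S u v)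
  | [], _, _ => List.isChain_nil
  | [_], _, _ => List.isChain_singleton _
  | a :: b :: t, hS, hR => by
      rw [List.Chain', List.isChain_cons_cons] at hR ⊢
      exact ⟨⟨hR.1, hS a (by simp) b (by simp)⟩,
        chain'_with (b :: t)
          (fun u hu v hv => hS u (List.mem_cons_of_mem _ hu) v (List.mem_cons_of_mem _ hv))
          hR.2⟩

private lemma chain'_rtg {Q : X → X → Prop} :
    ∀ (l : List X) (a : X), List.Chain' Q (a :: l) → ∀ y ∈ a :: l,
      Relation.ReflTransGen Q a y
  | [], _, _, y, hy => by
      simp only [List.mem_singleton] at hy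
      subst hy; exact Relation.ReflTransGen.refl
  | b :: t, a, h, y, hy => by
      rw [List.Chain', List.isChain_cons_cons] at h
      rcases List.mem_cons.mp hy with rfl | hy'
      · exact Relation.ReflTransGen.refl
      · exact Relation.ReflTransGen.head h.1 (chain'_rtg t b h.2 y hy')

private lemma rtg_exists_chain {r : ℝ} {Q : X → X → Prop}
    (hQ : ∀ u v, Q u v → dist u v ≤ r) {P : X → Prop}
    (hstep : ∀ u v, P u → Q u v → P v) {x y : X} (hx : P x)
    (h : Relation.ReflTransGen Q x y) :
    ∃ l : List X, (∀ z ∈ l, P z ∧ Relation.ReflTransGen Q x z) ∧ IsRChain r l ∧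
      l.head? = some x ∧ l.getLast? = some y := by
  induction h with
  | refl =>
      refine ⟨[x], ?_, by simp [IsRChain, List.Chain'], rfl, rfl⟩
      intro z hz
      simp only [List.mem_singleton] at hz
      subst hz
      exact ⟨hx, Relation.ReflTransGen.refl⟩
  | @tail b c hab hbc ih =>
      obtain ⟨l, hmem, hch, hhd, hlast⟩ := ih
      have hbmem : b ∈ l := List.mem_of_mem_getLast? (by rw [hlast]; rfl)
      have hPb : P b := (hmem b hbmem).1
      have hPc : P c := hstep b c hPb hbc
      refine ⟨l ++ [c], ?_, ?_, ?_, List.getLast?_concat (l := l)⟩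
      · intro z hz
        rcases List.mem_append.mp hz with hz | hz
        · exact hmem z hz
        · simp only [List.mem_singleton] at hz
          subst hz
          exact ⟨hPc, hab.tail hbc⟩
      · refine List.isChain_append.mpr ⟨hch, List.isChain_singleton _, ?_⟩
        intro u hu v hv
        rw [hlast, Option.mem_some_iff] at hu
        simp only [List.head?, Option.mem_some_iff] at hv
        subst hu; subst hv
        exact hQ _ _ hbc
      · cases l with
        | nil => simp at hhd
        | cons a t => simpa using hhd

private lemma forward_coloring {n : ℕ} (h : AsdimLE X n) {r : ℝ} (hr : 0 < r) :
    ∃ D > (0 : ℝ), ∃ χ : X → Fin (n + 1), ∀ l : List X, IsRChain r l → Monochrome χ l →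
      EMetric.diam {x | x ∈ l} ≤ ENNReal.ofReal D := by
  classical
  set e : ℝ := r + 1 with he
  have he0 : 0 < e := by linarith
  set L : ℝ := (n + 2) * e with hLdef
  have hL0 : 0 < L := by positivity
  obtain ⟨D, hD, U0, hcov, hdiam, hmult⟩ := h (2 * L) (by positivity)
  set U : Set (Set X) := {u ∈ U0 | u.Nonempty} with hUdef
  set f : Set X → X → ℝ := fun u x => max 0 (L - Metric.infDist x u) with hfdef
  have hcov' : ∀ x : X, ∃ u, u ∈ U ∧ x ∈ u := by
    intro x
    have : x ∈ ⋃₀ U0 := by rw [hcov]; trivial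
    obtain ⟨u, hu, hxu⟩ := this
    exact ⟨u, ⟨hu, ⟨x, hxu⟩⟩, hxu⟩
  have hfmem : ∀ (u : Set X) (x : X), x ∈ u → f u x = L := by
    intro u x hx
    simp [hfdef, Metric.infDist_zero_of_mem hx, hL0.le]
  have hlip : ∀ (u : Set X) (x y : X), f u x ≤ f u y + dist x y := by
    intro u x y
    have h1 : Metric.infDist y u ≤ Metric.infDist x u + dist y x :=
      Metric.infDist_le_infDist_add_dist
    have h2 : (0:ℝ) ≤ f u y := le_max_left _ _
    refine max_le (by positivity) ?_
    have : L - Metric.infDist x u ≤ (L - Metric.infDist y u) + dist x y := by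
      rw [dist_comm x y]; linarith
    calc L - Metric.infDist x u ≤ (L - Metric.infDist y u) + dist x y := this
      _ ≤ f u y + dist x y := by
          have := le_max_right (0:ℝ) (L - Metric.infDist y u); linarith
  set S : X → Set (Set X) := fun x => {u ∈ U0 | (u ∩ Metric.ball x (2 * L)).Nonempty}
    with hSdef
  have hSfin : ∀ x, (S x).Finite := fun x => (hmult x).1
  have hScard : ∀ x, (S x).ncard ≤ n + 1 := fun x => (hmult x).2
  have hfS : ∀ (u : Set X) (x : X), u ∈ U → 0 < f u x → u ∈ S x := by
    intro u x huU hfu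
    have hne : u.Nonempty := huU.2
    have : Metric.infDist x u < L := by
      by_contra hcon
      push_neg at hcon
      have : f u x = 0 := max_eq_left (by linarith)
      rw [this] at hfu; exact lt_irrefl _ hfu
    have : Metric.infDist x u < 2 * L := by linarith
    obtain ⟨y, hyu, hy⟩ := (Metric.infDist_lt_iff hne).mp this
    exact ⟨huU.1, ⟨y, hyu, by rwa [Metric.mem_ball, dist_comm]⟩⟩
  -- choose the gap level k
  have hk : ∀ x : X, ∃ k : ℕ, (1 ≤ k ∧ k ≤ n + 1) ∧
      ∀ u ∈ U, f u x ≤ k * e - e / 2 ∨ k * e + e / 2 ≤ f u x := by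
    intro x
    by_contra hcon
    push_neg at hcon
    have hblock : ∀ k : ℕ, ∃ u : Set X, 1 ≤ k ∧ k ≤ n + 1 →
        u ∈ U ∧ (k : ℝ) * e - e / 2 < f u x ∧ f u x < k * e + e / 2 := by
      intro k
      by_cases hk' : 1 ≤ k ∧ k ≤ n + 1
      · obtain ⟨u, huU, hu⟩ := hcon k hk'
        exact ⟨u, fun _ => ⟨huU, hu.1, hu.2⟩⟩
      · exact ⟨∅, fun h => absurd h hk'⟩
    choose g hg using hblock
    obtain ⟨u₀, hu₀U, hxu₀⟩ := hcov' x
    have hfu₀ : f u₀ x = L := hfmem u₀ x hxu₀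
    have hginj : Set.InjOn g ↑(Finset.Icc 1 (n+1)) := by
      intro k hk1 k' hk2 hgg
      rw [Finset.coe_Icc, Set.mem_Icc] at hk1 hk2
      by_contra hne
      rcases Nat.lt_or_ge k k' with hlt | hge
      · have h1 : (k:ℝ) * e + e / 2 ≤ (k':ℝ) * e - e / 2 := by
          have : (k:ℝ) + 1 ≤ (k':ℝ) := by exact_mod_cast hlt
          nlinarith
        have ha := (hg k hk1).2.2
        have hb := (hg k' hk2).2.1
        rw [hgg] at ha
        linarith
      · have hlt : k' < k := lt_of_le_of_ne hge (fun hh => hne hh.symm)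
        have h1 : (k':ℝ) * e + e / 2 ≤ (k:ℝ) * e - e / 2 := by
          have : (k':ℝ) + 1 ≤ (k:ℝ) := by exact_mod_cast hlt
          nlinarith
        have ha := (hg k' hk2).2.2
        have hb := (hg k hk1).2.1
        rw [hgg] at hb
        linarith
    set T : Finset (Set X) := Finset.image g (Finset.Icc 1 (n+1)) with hTdef
    have hTcard : T.card = n + 1 := by
      rw [hTdef, Finset.card_image_of_injOn hginj, Nat.card_Icc]
      omega
    have hu₀T : u₀ ∉ T := by
      intro hmem
      rw [hTdef, Finset.mem_image] at hmem
      obtain ⟨k, hk', hgk⟩ := hmem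
      rw [Finset.mem_Icc] at hk'
      have := (hg k hk').2.2
      rw [hgk, hfu₀] at this
      have : ((n:ℝ) + 2) * e ≤ (k:ℝ) * e + e / 2 := by
        rw [hLdef] at this; push_cast at this ⊢; linarith
      have hkle : (k:ℝ) ≤ (n:ℝ) + 1 := by exact_mod_cast hk'.2
      nlinarith
    have hsub : (↑(insert u₀ T) : Set (Set X)) ⊆ S x := by
      intro u hu
      rw [Finset.coe_insert, Set.mem_insert_iff] at hu
      rcases hu with rfl | hu
      · exact ⟨hu₀U.1, ⟨x, hxu₀, by simp [Metric.mem_ball, hL0]⟩⟩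
      · rw [Finset.mem_coe, hTdef, Finset.mem_image] at hu
        obtain ⟨k, hk', hgk⟩ := hu
        rw [Finset.mem_Icc] at hk'
        have hlo := (hg k hk').2.1
        have hk1 : (1:ℝ) ≤ (k:ℝ) := by exact_mod_cast hk'.1
        apply hfS _ _ (by rw [← hgk]; exact (hg k hk').1)
        rw [← hgk]
        nlinarith
    have : n + 2 ≤ (S x).ncard := by
      have h1 : (↑(insert u₀ T) : Set (Set X)).ncard = n + 2 := by
        rw [Set.ncard_coe_finset, Finset.card_insert_of_notMem hu₀T, hTcard]
      rw [← h1]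
      exact Set.ncard_le_ncard hsub (hSfin x)
    have := hScard x
    omega
  choose k hk1 hk2 using hk
  set σ : X → Set (Set X) := fun x => {u ∈ U | (k x : ℝ) * e + e / 2 ≤ f u x} with hσdef
  have hσS : ∀ x, σ x ⊆ S x := by
    intro x u hu
    apply hfS u x hu.1
    have hx1 : (1:ℝ) ≤ (k x : ℝ) := by exact_mod_cast (hk1 x).1
    have := hu.2
    nlinarith
  have hσfin : ∀ x, (σ x).Finite := fun x => (hSfin x).subset (hσS x)
  have hσle : ∀ x, (σ x).ncard ≤ n + 1 :=
    fun x => le_trans (Set.ncard_le_ncard (hσS x) (hSfin x)) (hScard x)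
  have hσne : ∀ x, (σ x).Nonempty := by
    intro x
    obtain ⟨u, huU, hxu⟩ := hcov' x
    refine ⟨u, huU, ?_⟩
    rw [hfmem u x hxu, hLdef]
    have hkx : (k x : ℝ) ≤ (n:ℝ) + 1 := by exact_mod_cast (hk1 x).2
    push_cast
    nlinarith
  have hσpos : ∀ x, 1 ≤ (σ x).ncard := by
    intro x
    have := (Set.ncard_pos (hσfin x)).mpr (hσne x)
    omega
  set χ : X → Fin (n + 1) := fun x => ⟨(σ x).ncard - 1, by have := hσle x; omega⟩ with hχdef
  -- separation
  have hone : ∀ x y : X, dist x y ≤ r → k y ≤ k x → σ x \ σ y = ∅ := by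
    intro x y hxy hkk
    rw [Set.diff_eq_empty]
    intro u hu
    by_contra huy
    have huU : u ∈ U := hu.1
    have hfx : (k x : ℝ) * e + e / 2 ≤ f u x := hu.2
    have hfy : f u y ≤ (k y : ℝ) * e - e / 2 := by
      rcases hk2 y u huU with h' | h'
      · exact h'
      · exact absurd ⟨huU, h'⟩ huy
    have hcast : (k y : ℝ) ≤ (k x : ℝ) := by exact_mod_cast hkk
    have := hlip u x y
    have : (k x : ℝ) * e + e / 2 ≤ (k y : ℝ) * e - e / 2 + dist x y := by linarith
    have : e ≤ dist x y := by nlinarith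
    rw [he] at this
    linarith
  have hσeq : ∀ x y : X, dist x y ≤ r → χ x = χ y → σ x = σ y := by
    intro x y hxy hχxy
    have hncard : (σ x).ncard = (σ y).ncard := by
      have h1 := hσpos x
      have h2 := hσpos y
      have := Fin.mk.injEq ((σ x).ncard - 1) _ ((σ y).ncard - 1) _ ▸ hχxy
      rw [hχdef] at hχxy
      simp only [Fin.mk.injEq] at hχxy
      omega
    rcases le_total (k x) (k y) with hkk | hkk
    · have h' := hone y x (by rwa [dist_comm]) hkk
      rw [Set.diff_eq_empty] at h'
      exact (Set.eq_of_subset_of_ncard_le h' (le_of_eq hncard) (hσfin x)).symm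
    · have h' := hone x y hxy hkk
      rw [Set.diff_eq_empty] at h'
      exact Set.eq_of_subset_of_ncard_le h' (le_of_eq hncard.symm) (hσfin y)
  -- constancy of σ along monochrome chains
  have hconst : ∀ (t : List X) (a : X), IsRChain r (a :: t) →
      (∀ z ∈ a :: t, χ z = χ a) → ∀ z ∈ a :: t, σ z = σ a := by
    intro t
    induction t with
    | nil =>
        intro a _ _ z hz
        simp only [List.mem_singleton] at hz
        subst hz; rfl
    | cons b t' ih =>
        intro a hch hmono z hz
        have hch' := (List.isChain_cons_cons.mp hch)
        have hσab : σ a = σ b := hσeq a b hch'.1 (hmono b (by simp)).symm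
        rcases List.mem_cons.mp hz with rfl | hz'
        · rfl
        · have hmono' : ∀ w ∈ b :: t', χ w = χ b := by
            intro w hw
            rw [hmono w (List.mem_cons_of_mem _ hw), hmono b (by simp)]
          rw [ih b hch'.2 hmono' z hz', hσab]
  refine ⟨D + 2 * L, by positivity, χ, ?_⟩
  intro l hch hmono
  cases l with
  | nil =>
      have : {x : X | x ∈ ([] : List X)} = ∅ := by simp
      rw [this, show EMetric.diam (∅ : Set X) = 0 from Metric.ediam_empty]
      exact zero_le
  | cons a t =>
      obtain ⟨u₀, hu₀⟩ := hσne a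
      have hu₀U0 : u₀ ∈ U0 := hu₀.1.1
      have hu₀ne : u₀.Nonempty := hu₀.1.2
      have hnear : ∀ z ∈ a :: t, ∃ p ∈ u₀, dist z p < L := by
        intro z hz
        have hσz : σ z = σ a := hconst t a hch
          (fun w hw => hmono w hw a (by simp)) z hz
        have hu₀z : u₀ ∈ σ z := hσz ▸ hu₀
        have hfpos : (0:ℝ) < f u₀ z := by
          have hx1 : (1:ℝ) ≤ (k z : ℝ) := by exact_mod_cast (hk1 z).1
          have := hu₀z.2
          nlinarith
        have : Metric.infDist z u₀ < L := by
          by_contra hcon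
          push_neg at hcon
          have : f u₀ z = 0 := max_eq_left (by linarith)
          rw [this] at hfpos; exact lt_irrefl _ hfpos
        exact (Metric.infDist_lt_iff hu₀ne).mp this
      apply EMetric.diam_le
      intro y hy z hz
      obtain ⟨p, hp, hyp⟩ := hnear y hy
      obtain ⟨q, hq, hzq⟩ := hnear z hz
      calc edist y z ≤ edist y p + edist p q + edist q z := edist_triangle4 y p q z
        _ ≤ ENNReal.ofReal L + ENNReal.ofReal D + ENNReal.ofReal L := by
            gcongr
            · rw [edist_dist]
              exact ENNReal.ofReal_le_ofReal hyp.le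
            · exact le_trans (EMetric.edist_le_diam_of_mem hp hq) (hdiam u₀ hu₀U0)
            · rw [edist_dist, dist_comm]
              exact ENNReal.ofReal_le_ofReal hzq.le
        _ = ENNReal.ofReal (D + 2 * L) := by
            rw [← ENNReal.ofReal_add hL0.le hD.le, ← ENNReal.ofReal_add (by positivity) hL0.le]
            ring_nf
        _ ≤ ENNReal.ofReal (D + 2 * L) := le_refl _

end AuxChains

theorem asdim_iff_finite_connected_colorings {X : Type*} [MetricSpace X] (n : ℕ) :
    AsdimLE X n ↔
      ∀ r > (0 : ℝ), ∃ D > (0 : ℝ), ∀ F : Set X, F.Finite → IsRConnected r F →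
        ∃ χ : X → Fin (n + 1),
          ∀ l : List X, (∀ x ∈ l, x ∈ F) → IsRChain r l → Monochrome χ l →
            EMetric.diam {x | x ∈ l} ≤ ENNReal.ofReal D := by
  classical
  constructor
  · intro h r hr
    obtain ⟨D, hD, χ, hχ⟩ := forward_coloring h hr
    exact ⟨D, hD, fun F _ _ => ⟨χ, fun l _ hc hm => hχ l hc hm⟩⟩
  · intro H r' hr'
    set r : ℝ := 2 * r' with hrdef
    have hr : 0 < r := by positivity
    obtain ⟨D, hD, hcol⟩ := H r hr
    -- Step 1: coloring of arbitrary finite sets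
    have step1 : ∀ F : Set X, F.Finite → ∃ χ : X → Fin (n + 1),
        ∀ l : List X, (∀ x ∈ l, x ∈ F) → IsRChain r l → Monochrome χ l →
          EMetric.diam {x | x ∈ l} ≤ ENNReal.ofReal D := by
      intro F hF
      set Rel : X → X → Prop := fun u v => dist u v ≤ r ∧ u ∈ F ∧ v ∈ F with hReldef
      have hRelsymm : Symmetric Rel := fun u v h => ⟨by rw [dist_comm]; exact h.1, h.2.2, h.2.1⟩
      have hRtgsymm : Symmetric (Relation.ReflTransGen Rel) := by
        haveI : Std.Symm Rel := ⟨hRelsymm⟩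
        exact fun a b h => Std.Symm.symm (r := Relation.ReflTransGen Rel) a b h
      set C : X → Set X := fun a => {z | z ∈ F ∧ Relation.ReflTransGen Rel a z} with hCdef
      have hCfin : ∀ a, (C a).Finite := fun a => hF.subset (fun z hz => hz.1)
      have hCconn : ∀ a ∈ F, IsRConnected r (C a) := by
        intro a ha x hx y hy
        have hxy : Relation.ReflTransGen Rel x y := (hRtgsymm hx.2).trans hy.2
        obtain ⟨l, hmem, hch, hhd, hlast⟩ := rtg_exists_chain
          (fun u v h => h.1) (P := fun z => z ∈ F) (fun u v _ h => h.2.2) hx.1 hxy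
        refine ⟨l, ?_, hch, hhd, hlast⟩
        intro z hz
        exact ⟨(hmem z hz).1, hx.2.trans (hmem z hz).2⟩
      set Good : Set X → (X → Fin (n + 1)) → Prop := fun A χ =>
        ∀ l : List X, (∀ x ∈ l, x ∈ A) → IsRChain r l → Monochrome χ l →
          EMetric.diam {x | x ∈ l} ≤ ENNReal.ofReal D with hGooddef
      set g : Set X → X → Fin (n + 1) := fun A =>
        if h : ∃ χ, Good A χ then h.choose else fun _ => 0 with hgdef
      have hg : ∀ a ∈ F, Good (C a) (g (C a)) := by
        intro a ha
        have hex : ∃ χ, Good (C a) χ := hcol (C a) (hCfin a) (hCconn a ha)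
        have hgc : g (C a) = hex.choose := dif_pos hex
        rw [hgc]
        exact hex.choose_spec
      refine ⟨fun x => g (C x) x, ?_⟩
      intro l hlF hlc hlm
      cases l with
      | nil =>
          have hempty : {x : X | x ∈ ([] : List X)} = ∅ := by simp
          rw [hempty, show EMetric.diam (∅ : Set X) = 0 from Metric.ediam_empty]
          exact zero_le
      | cons a t =>
          have ha : a ∈ F := hlF a (by simp)
          have hchainRel : List.Chain' Rel (a :: t) :=
            chain'_with (R := fun u v => dist u v ≤ r)
              (S := fun u v => u ∈ F ∧ v ∈ F) (a :: t)
              (fun u hu v hv => ⟨hlF u hu, hlF v hv⟩) hlc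
          have hrtg : ∀ z ∈ a :: t, Relation.ReflTransGen Rel a z :=
            chain'_rtg t a hchainRel
          have hCeq : ∀ z ∈ a :: t, C z = C a := by
            intro z hz
            have haz := hrtg z hz
            ext w
            simp only [hCdef, Set.mem_setOf_eq]
            constructor
            · rintro ⟨hwF, hzw⟩; exact ⟨hwF, haz.trans hzw⟩
            · rintro ⟨hwF, haw⟩; exact ⟨hwF, (hRtgsymm haz).trans haw⟩
          have hχeq : ∀ z ∈ a :: t, g (C z) z = g (C a) z := fun z hz => by
            rw [hCeq z hz]
          apply hg a ha (a :: t) ?_ hlc ?_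
          · intro z hz; exact ⟨hlF z hz, hrtg z hz⟩
          · intro u hu v hv
            rw [← hχeq u hu, ← hχeq v hv]
            exact hlm u hu v hv
    -- Step 2: global coloring via an ultrafilter
    choose χF hχF using fun F : Finset X => step1 ↑F F.finite_toSet
    haveI : (Filter.atTop : Filter (Finset X)).NeBot := Filter.atTop_neBot
    set 𝒰 : Ultrafilter (Finset X) := Ultrafilter.of Filter.atTop with h𝒰
    have hle : ∀ s : Set (Finset X), s ∈ (Filter.atTop : Filter (Finset X)) → s ∈ 𝒰 :=
      fun s hs => Ultrafilter.of_le Filter.atTop hs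
    have hexcol : ∀ x : X, ∃ i : Fin (n + 1), {F : Finset X | χF F x = i} ∈ 𝒰 := by
      intro x
      by_contra hcon
      push_neg at hcon
      have hcompl : ∀ i : Fin (n + 1), {F : Finset X | χF F x = i}ᶜ ∈ 𝒰 :=
        fun i => (Ultrafilter.compl_mem_iff_notMem).mpr (hcon i)
      have hint : (⋂ i : Fin (n + 1), {F : Finset X | χF F x = i}ᶜ) ∈ 𝒰 :=
        (Filter.iInter_mem).mpr hcompl
      obtain ⟨F, hF⟩ := Ultrafilter.nonempty_of_mem hint
      simp only [Set.mem_iInter, Set.mem_compl_iff, Set.mem_setOf_eq] at hF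
      exact hF (χF F x) rfl
    choose χ hχmem using hexcol
    have step2 : ∀ l : List X, IsRChain r l → Monochrome χ l →
        EMetric.diam {x | x ∈ l} ≤ ENNReal.ofReal D := by
      intro l hlc hlm
      have hs : (⋂ x ∈ l.toFinset, ({F : Finset X | x ∈ F} ∩ {F | χF F x = χ x})) ∈ 𝒰 := by
        rw [← Ultrafilter.mem_coe, Filter.biInter_finset_mem]
        intro x _
        apply Filter.inter_mem
        · apply Ultrafilter.mem_coe.mpr
          apply hle
          apply Filter.mem_of_superset (Filter.Ici_mem_atTop ({x} : Finset X))
          intro F hF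
          exact Finset.singleton_subset_iff.mp hF
        · exact Ultrafilter.mem_coe.mpr (hχmem x)
      obtain ⟨F, hF⟩ := Ultrafilter.nonempty_of_mem hs
      have hFl : ∀ x ∈ l, x ∈ F ∧ χF F x = χ x := by
        intro x hx
        have := Set.mem_iInter₂.mp hF x (List.mem_toFinset.mpr hx)
        exact ⟨this.1, this.2⟩
      apply hχF F l (fun x hx => (hFl x hx).1) hlc
      intro u hu v hv
      rw [(hFl u hu).2, (hFl v hv).2]
      exact hlm u hu v hv
    -- Build the cover from monochrome chain components
    set Q : X → X → Prop := fun u v => dist u v ≤ r ∧ χ u = χ v with hQdef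
    have hQsymm : Symmetric Q := fun u v h => ⟨by rw [dist_comm]; exact h.1, h.2.symm⟩
    have hEsymm : Symmetric (Relation.ReflTransGen Q) := by
      haveI : Std.Symm Q := ⟨hQsymm⟩
      exact fun a b h => Std.Symm.symm (r := Relation.ReflTransGen Q) a b h
    have hEcolor : ∀ {a b : X}, Relation.ReflTransGen Q a b → χ a = χ b := by
      intro a b h
      induction h with
      | refl => rfl
      | tail _ h2 ih => exact ih.trans h2.2
    have hEdist : ∀ {a b : X}, Relation.ReflTransGen Q a b →
        edist a b ≤ ENNReal.ofReal D := by
      intro a b h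
      obtain ⟨l, hmem, hch, hhd, hlast⟩ := rtg_exists_chain (fun u v hq => hq.1)
        (P := fun z => χ z = χ a) (fun u v hu hq => hq.2.symm.trans hu) rfl h
      have hal : a ∈ l := List.mem_of_mem_head? (by rw [hhd]; rfl)
      have hbl : b ∈ l := List.mem_of_mem_getLast? (by rw [hlast]; rfl)
      have hmono : Monochrome χ l := by
        intro u hu v hv
        rw [(hmem u hu).1, (hmem v hv).1]
      exact le_trans
        (EMetric.edist_le_diam_of_mem (show a ∈ {x : X | x ∈ l} from hal)
          (show b ∈ {x : X | x ∈ l} from hbl)) (step2 l hch hmono)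
    set cls : X → Set X := fun x => {y | Relation.ReflTransGen Q x y} with hclsdef
    have hclsmem : ∀ x, x ∈ cls x := fun x => Relation.ReflTransGen.refl
    have hclseq : ∀ {x y : X}, Relation.ReflTransGen Q x y → cls x = cls y := by
      intro x y h
      ext w
      simp only [hclsdef, Set.mem_setOf_eq]
      exact ⟨fun hw => (hEsymm h).trans hw, fun hw => h.trans hw⟩
    refine ⟨D, hD, Set.range cls, ?_, ?_, ?_⟩
    · apply Set.eq_univ_of_forall
      intro x
      exact ⟨cls x, ⟨x, rfl⟩, hclsmem x⟩
    · rintro u ⟨x, rfl⟩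
      apply EMetric.diam_le
      intro y hy z hz
      exact hEdist ((hEsymm hy).trans hz)
    · intro x
      set co : Set X → Fin (n + 1) := fun u => if h : u.Nonempty then χ h.choose else 0
        with hcodef
      have hco : ∀ a : X, co (cls a) = χ a := by
        intro a
        have hne : (cls a).Nonempty := ⟨a, hclsmem a⟩
        have : co (cls a) = χ hne.choose := dif_pos hne
        rw [this]
        exact (hEcolor hne.choose_spec).symm
      have hinj : Set.InjOn co {u ∈ Set.range cls | (u ∩ Metric.ball x r').Nonempty} := by
        rintro u₁ ⟨⟨a₁, rfl⟩, z₁, hz₁u, hz₁b⟩ u₂ ⟨⟨a₂, rfl⟩, z₂, hz₂u, hz₂b⟩ hco12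
        rw [hco a₁, hco a₂] at hco12
        have hχz : χ z₁ = χ z₂ := by
          calc χ z₁ = χ a₁ := (hEcolor hz₁u).symm
            _ = χ a₂ := hco12
            _ = χ z₂ := hEcolor hz₂u
        have hdz : dist z₁ z₂ ≤ r := by
          have h1 : dist z₁ x < r' := Metric.mem_ball.mp hz₁b
          have h2 : dist z₂ x < r' := Metric.mem_ball.mp hz₂b
          have := dist_triangle z₁ x z₂
          rw [dist_comm x z₂] at this
          rw [hrdef]
          linarith
        have hE : Relation.ReflTransGen Q a₁ a₂ :=
          (hz₁u.trans (Relation.ReflTransGen.single ⟨hdz, hχz⟩)).trans (hEsymm hz₂u)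
        exact hclseq hE
      have hTfin : {u ∈ Set.range cls | (u ∩ Metric.ball x r').Nonempty}.Finite :=
        Set.Finite.of_finite_image (Set.toFinite _) hinj
      refine ⟨hTfin, ?_⟩
      have h1 := (Set.ncard_image_of_injOn hinj).symm
      rw [h1]
      have h2 : (co '' {u ∈ Set.range cls | (u ∩ Metric.ball x r').Nonempty}).ncard ≤
          (Set.univ : Set (Fin (n + 1))).ncard :=
        Set.ncard_le_ncard (Set.subset_univ _) Set.finite_univ
      rwa [Set.ncard_univ, Nat.card_eq_fintype_card, Fintype.card_fin] at h2
end

section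
/- Let A and B be subsets of a metric space X, each carrying the induced metric, and let n ∈ ℕ. If asdim(A) ≤ n and asdim(B) ≤ n, then asdim(A ∪ B) ≤ n. -/
open Metric Set

/-- Colored covers of a subset `Y` of `X`: for every scale `s` there are `n+1` families of
uniformly bounded sets covering `Y`, each family `s`-disjoint. -/
def ColoredCovers {X : Type*} [MetricSpace X] (Y : Set X) (n : ℕ) : Prop :=
  ∀ s > (0 : ℝ), ∃ D > (0 : ℝ), ∃ C : Fin (n + 1) → Set (Set X),
    (∀ y ∈ Y, ∃ i, ∃ u ∈ C i, y ∈ u) ∧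
    (∀ i, ∀ u ∈ C i, ∀ x ∈ u, ∀ y ∈ u, dist x y ≤ D) ∧
    (∀ i, ∀ u ∈ C i, ∀ v ∈ C i, u ≠ v → ∀ x ∈ u, ∀ y ∈ v, s < dist x y)

/-- From an asymptotic-dimension bound, extract colored covers (for the whole space). -/
lemma asdimLE_colored {Z : Type*} [MetricSpace Z] (n : ℕ) (h : AsdimLE Z n)
    (s : ℝ) (hs : 0 < s) :
    ∃ D > (0 : ℝ), ∃ C : Fin (n + 1) → Set (Set Z),
      (∀ z : Z, ∃ i, ∃ u ∈ C i, z ∈ u) ∧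
      (∀ i, ∀ u ∈ C i, ∀ x ∈ u, ∀ y ∈ u, dist x y ≤ D) ∧
      (∀ i, ∀ u ∈ C i, ∀ v ∈ C i, u ≠ v → ∀ x ∈ u, ∀ y ∈ v, s < dist x y) := by
  obtain ⟨D, hD, 𝒰, hcov, hdiam, hmul⟩ := h (((n : ℝ) + 2) * s) (by positivity)
  set N : Z → ℝ → Set (Set Z) := fun x t => {U | U ∈ 𝒰 ∧ ∃ u ∈ U, dist x u ≤ t} with hNdef
  have hmono : ∀ (x : Z) (t t' : ℝ), t ≤ t' → N x t ⊆ N x t' := by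
    rintro x t t' htt U ⟨hU, u, hu, hd⟩; exact ⟨hU, u, hu, hd.trans htt⟩
  have hNM : ∀ (x : Z) (t : ℝ), t ≤ ((n : ℝ) + 1) * s →
      N x t ⊆ {u ∈ 𝒰 | (u ∩ Metric.ball x (((n : ℝ) + 2) * s)).Nonempty} := by
    rintro x t ht U ⟨hU, u, hu, hd⟩
    refine ⟨hU, u, hu, ?_⟩
    rw [mem_ball, dist_comm]
    have h1 : ((n : ℝ) + 1) * s < ((n : ℝ) + 2) * s := by nlinarith
    linarith [hd.trans ht]
  have hNfin : ∀ (x : Z) (t : ℝ), t ≤ ((n : ℝ) + 1) * s → (N x t).Finite :=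
    fun x t ht => (hmul x).1.subset (hNM x t ht)
  have hNcard : ∀ (x : Z) (t : ℝ), t ≤ ((n : ℝ) + 1) * s → (N x t).ncard ≤ n + 1 :=
    fun x t ht => le_trans (Set.ncard_le_ncard (hNM x t ht) (hmul x).1) (hmul x).2
  have hN0 : ∀ x : Z, (N x 0).Nonempty := by
    intro x
    have hx : x ∈ ⋃₀ 𝒰 := by rw [hcov]; trivial
    obtain ⟨U, hU, hxU⟩ := hx
    exact ⟨U, hU, x, hxU, by simp⟩
  have hgap : ∀ x : Z, ∃ k, k ≤ n ∧
      (N x ((k : ℝ) * s)).ncard = (N x (((k : ℝ) + 1) * s)).ncard := by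
    intro x
    by_contra hcon
    push_neg at hcon
    have hstep : ∀ k, k ≤ n →
        (N x ((k : ℝ) * s)).ncard < (N x (((k : ℝ) + 1) * s)).ncard := by
      intro k hk
      have hkn : ((k : ℝ) + 1) * s ≤ ((n : ℝ) + 1) * s := by
        have : (k : ℝ) ≤ (n : ℝ) := by exact_mod_cast hk
        nlinarith
      have hle : (N x ((k : ℝ) * s)).ncard ≤ (N x (((k : ℝ) + 1) * s)).ncard :=
        Set.ncard_le_ncard (hmono x _ _ (by nlinarith)) (hNfin x _ hkn)
      exact lt_of_le_of_ne hle (hcon k hk)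
    have hind : ∀ j, j ≤ n + 1 → (N x 0).ncard + j ≤ (N x ((j : ℝ) * s)).ncard := by
      intro j
      induction j with
      | zero => intro _; simp
      | succ j ih =>
        intro hj
        have h1 := ih (by omega)
        have h2 := hstep j (by omega)
        push_cast
        omega
    have h1 := hind (n + 1) le_rfl
    have h2 : 0 < (N x 0).ncard :=
      (Set.ncard_pos (hNfin x 0 (by positivity))).mpr (hN0 x)
    have h3 : (N x (((n + 1 : ℕ) : ℝ) * s)).ncard ≤ n + 1 :=
      hNcard x _ (by push_cast; linarith)
    omega
  choose kc hkc hkgap using hgap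
  refine ⟨2 * (n : ℝ) * s + D, by positivity,
    fun i => {w | ∃ σ : Set (Set Z),
      w = {y | kc y = (i : ℕ) ∧ N y (((i : ℕ) : ℝ) * s) = σ}}, ?_, ?_, ?_⟩
  · intro z
    exact ⟨⟨kc z, Nat.lt_succ_of_le (hkc z)⟩, _,
      ⟨N z ((kc z : ℝ) * s), rfl⟩, ⟨rfl, rfl⟩⟩
  · rintro i w ⟨σ, rfl⟩ x hx y hy
    obtain ⟨hxk, hxσ⟩ := hx
    obtain ⟨hyk, hyσ⟩ := hy
    have hins : ((i : ℕ) : ℝ) ≤ (n : ℝ) := by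
      exact_mod_cast Nat.lt_succ_iff.mp i.isLt
    have h0 : (0 : ℝ) ≤ ((i : ℕ) : ℝ) * s := by positivity
    obtain ⟨U, hU⟩ := hN0 x
    have hUx : U ∈ N x (((i : ℕ) : ℝ) * s) := hmono x 0 _ h0 hU
    have hUσ : U ∈ σ := hxσ ▸ hUx
    have hUy : U ∈ N y (((i : ℕ) : ℝ) * s) := by rw [hyσ]; exact hUσ
    obtain ⟨hU𝒰, u, hu, hxu⟩ := hUx
    obtain ⟨-, u', hu', hyu'⟩ := hUy
    have hdu : dist u u' ≤ D := by
      have h1 : edist u u' ≤ ENNReal.ofReal D :=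
        le_trans (EMetric.edist_le_diam_of_mem hu hu') (hdiam U hU𝒰)
      rw [edist_dist] at h1
      exact (ENNReal.ofReal_le_ofReal_iff hD.le).mp h1
    have htri := dist_triangle4 x u u' y
    have hyu'' : dist u' y ≤ ((i : ℕ) : ℝ) * s := by rw [dist_comm]; exact hyu'
    nlinarith
  · rintro i w ⟨σ, rfl⟩ w' ⟨σ', rfl⟩ hne x hx y hy
    by_contra hle
    push_neg at hle
    obtain ⟨hxk, hxσ⟩ := hx
    obtain ⟨hyk, hyσ⟩ := hy
    have hσ : σ ≠ σ' := by rintro rfl; exact hne rfl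
    have hins : ((i : ℕ) : ℝ) ≤ (n : ℝ) := by
      exact_mod_cast Nat.lt_succ_iff.mp i.isLt
    have key : ∀ a b : Z, kc b = (i : ℕ) → dist a b ≤ s →
        N a (((i : ℕ) : ℝ) * s) ⊆ N b (((i : ℕ) : ℝ) * s) := by
      rintro a b hkb hab U ⟨hU, u, hu, hau⟩
      have hUb : U ∈ N b ((((i : ℕ) : ℝ) + 1) * s) := by
        refine ⟨hU, u, hu, ?_⟩
        have h1 : dist b u ≤ dist b a + dist a u := dist_triangle b a u
        have h2 : dist b a ≤ s := by rw [dist_comm]; exact hab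
        nlinarith
      have heq : N b (((i : ℕ) : ℝ) * s) = N b ((((i : ℕ) : ℝ) + 1) * s) := by
        refine Set.eq_of_subset_of_ncard_le (hmono b _ _ (by nlinarith)) ?_
          (hNfin b _ (by nlinarith))
        have hg := hkgap b
        rw [hkb] at hg
        exact hg.ge
      rw [heq]; exact hUb
    have h1 : σ ⊆ σ' := by
      rw [← hxσ, ← hyσ]; exact key x y hyk hle
    have h2 : σ' ⊆ σ := by
      rw [← hyσ, ← hxσ]; exact key y x hxk (by rw [dist_comm]; exact hle)
    exact hσ (subset_antisymm h1 h2)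

/-- Transfer colored covers from the subtype `↥Y` to the subset `Y` of `X`. -/
lemma asdimLE_coloredCovers {X : Type*} [MetricSpace X] (Y : Set X) (n : ℕ)
    (h : AsdimLE ↥Y n) : ColoredCovers Y n := by
  intro s hs
  obtain ⟨D, hD, C, hcov, hbdd, hdis⟩ := asdimLE_colored n h s hs
  refine ⟨D, hD, fun i => (Set.image (Subtype.val : ↥Y → X)) '' C i, ?_, ?_, ?_⟩
  · intro y hy
    obtain ⟨i, u, hu, hmem⟩ := hcov ⟨y, hy⟩
    exact ⟨i, Subtype.val '' u, ⟨u, hu, rfl⟩, ⟨⟨y, hy⟩, hmem, rfl⟩⟩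
  · rintro i w ⟨u, hu, rfl⟩ x ⟨p, hp, rfl⟩ y ⟨q, hq, rfl⟩
    rw [← Subtype.dist_eq]
    exact hbdd i u hu p hp q hq
  · rintro i w ⟨u, hu, rfl⟩ w' ⟨v, hv, rfl⟩ hne x ⟨p, hp, rfl⟩ y ⟨q, hq, rfl⟩
    have huv : u ≠ v := by rintro rfl; exact hne rfl
    rw [← Subtype.dist_eq]
    exact hdis i u hu v hv huv p hp q hq
    
/-- Union theorem at the level of colored covers, via saturation. -/
lemma coloredCovers_union {X : Type*} [MetricSpace X] (A B : Set X) (n : ℕ)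
    (hA : ColoredCovers A n) (hB : ColoredCovers B n) : ColoredCovers (A ∪ B) n := by
  intro s hs
  obtain ⟨DA, hDA, 𝒰, hcovA, hbA, hdA⟩ := hA s hs
  obtain ⟨DB, hDB, 𝒱, hcovB, hbB, hdB⟩ := hB (2 * s + DA + 1) (by positivity)
  classical
  set near : Set X → Set X → Prop := fun U V => ∃ u ∈ U, ∃ v ∈ V, dist u v ≤ s with hneardef
  set sat : Fin (n + 1) → Set X → Set X :=
    fun i V => V ∪ ⋃₀ {U ∈ 𝒰 i | near U V} with hsatdef
  have hmem_sat : ∀ (i : Fin (n + 1)) (V : Set X), ∀ p ∈ sat i V,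
      p ∈ V ∨ ∃ U, U ∈ 𝒰 i ∧ near U V ∧ p ∈ U := by
    rintro i V p (hp | ⟨U, ⟨hU, hnUV⟩, hpU⟩)
    · exact Or.inl hp
    · exact Or.inr ⟨U, hU, hnUV, hpU⟩
  have hsat_close : ∀ (i : Fin (n + 1)) (V : Set X), ∀ p ∈ sat i V,
      ∃ v ∈ V, dist p v ≤ s + DA := by
    intro i V p hp
    rcases hmem_sat i V p hp with hpV | ⟨U, hU, ⟨u, hu, v, hv, huv⟩, hpU⟩
    · exact ⟨p, hpV, by rw [dist_self]; positivity⟩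
    · refine ⟨v, hv, ?_⟩
      have h1 : dist p v ≤ dist p u + dist u v := dist_triangle p u v
      have h2 : dist p u ≤ DA := hbA i U hU p hpU u hu
      linarith
  refine ⟨DB + 2 * s + 2 * DA, by positivity,
    fun i => (sat i '' 𝒱 i) ∪ {U ∈ 𝒰 i | ∀ V ∈ 𝒱 i, ¬ near U V}, ?_, ?_, ?_⟩
  · rintro y (hyA | hyB)
    · obtain ⟨i, U, hU, hyU⟩ := hcovA y hyA
      by_cases hc : ∃ V ∈ 𝒱 i, near U V
      · obtain ⟨V, hV, hn⟩ := hc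
        exact ⟨i, sat i V, Or.inl ⟨V, hV, rfl⟩, Or.inr ⟨U, ⟨hU, hn⟩, hyU⟩⟩
      · push_neg at hc
        exact ⟨i, U, Or.inr ⟨hU, hc⟩, hyU⟩
    · obtain ⟨i, V, hV, hyV⟩ := hcovB y hyB
      exact ⟨i, sat i V, Or.inl ⟨V, hV, rfl⟩, Or.inl hyV⟩
  · rintro i w (⟨V, hV, rfl⟩ | ⟨hU, -⟩)
    · intro x hx y hy
      obtain ⟨v, hv, hxv⟩ := hsat_close i V x hx
      obtain ⟨v', hv', hyv'⟩ := hsat_close i V y hy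
      have hvv : dist v v' ≤ DB := hbB i V hV v hv v' hv'
      have htri := dist_triangle4 x v v' y
      have h3 : dist v' y ≤ s + DA := by rw [dist_comm]; exact hyv'
      linarith
    · intro x hx y hy
      have := hbA i w hU x hx y hy
      linarith
  · -- disjointness
    have F1 : ∀ (i : Fin (n + 1)), ∀ V ∈ 𝒱 i, ∀ V' ∈ 𝒱 i, V ≠ V' →
        ∀ p ∈ V, ∀ U' ∈ 𝒰 i, near U' V' → ∀ q ∈ U', dist p q ≤ s → False := by
      intro i V hV V' hV' hVV' p hp U' hU' ⟨u', hu', v', hv', h1⟩ q hq hpq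
      have h2 : dist q u' ≤ DA := hbA i U' hU' q hq u' hu'
      have h3 : dist p v' ≤ dist p q + dist q u' + dist u' v' := dist_triangle4 p q u' v'
      have h4 := hdB i V hV V' hV' hVV' p hp v' hv'
      linarith
    have F2 : ∀ (i : Fin (n + 1)), ∀ V ∈ 𝒱 i, ∀ V' ∈ 𝒱 i, V ≠ V' →
        ∀ U ∈ 𝒰 i, near U V → near U V' → False := by
      intro i V hV V' hV' hVV' U hU ⟨u, hu, v, hv, h1⟩ ⟨u2, hu2, v2, hv2, h2⟩
      have h3 : dist u u2 ≤ DA := hbA i U hU u hu u2 hu2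
      have h4 : dist v v2 ≤ dist v u + dist u u2 + dist u2 v2 := dist_triangle4 v u u2 v2
      have h5 : dist v u ≤ s := by rw [dist_comm]; exact h1
      have h6 := hdB i V hV V' hV' hVV' v hv v2 hv2
      linarith
    rintro i w hw w' hw' hne x hx y hy
    by_contra hc
    push_neg at hc
    rcases hw with ⟨V, hV, rfl⟩ | ⟨hU, hkept⟩
    · rcases hw' with ⟨V', hV', rfl⟩ | ⟨hU', hkept'⟩
      · -- sat V vs sat V'
        have hVV' : V ≠ V' := by rintro rfl; exact hne rfl
        rcases hmem_sat i V x hx with hxV | ⟨U, hU, hnU, hxU⟩ <;>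
          rcases hmem_sat i V' y hy with hyV | ⟨U', hU', hnU', hyU⟩
        · have := hdB i V hV V' hV' hVV' x hxV y hyV; linarith
        · exact F1 i V hV V' hV' hVV' x hxV U' hU' hnU' y hyU hc
        · exact F1 i V' hV' V hV hVV'.symm y hyV U hU hnU x hxU
            (by rw [dist_comm]; exact hc)
        · by_cases hUU : U = U'
          · subst hUU; exact F2 i V hV V' hV' hVV' U hU hnU hnU'
          · have := hdA i U hU U' hU' hUU x hxU y hyU; linarith
      · -- sat V vs kept U'
        rcases hmem_sat i V x hx with hxV | ⟨U, hU, hnU, hxU⟩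
        · obtain ⟨hyU', -⟩ := hy, trivial
          exact hkept' V hV ⟨y, hy, x, hxV, by rw [dist_comm]; exact hc⟩
        · have hUU : U ≠ w' := by
            rintro rfl; exact hkept' V hV hnU
          have := hdA i U hU w' hU' hUU x hxU y hy; linarith
    · rcases hw' with ⟨V', hV', rfl⟩ | ⟨hU', hkept'⟩
      · -- kept U vs sat V'
        rcases hmem_sat i V' y hy with hyV | ⟨U', hU', hnU', hyU⟩
        · exact hkept V' hV' ⟨x, hx, y, hyV, hc⟩
        · have hUU : w ≠ U' := by
            rintro rfl; exact hkept V' hV' hnU'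
          have := hdA i w hU U' hU' hUU x hx y hyU; linarith
      · -- kept vs kept
        have := hdA i w hU w' hU' hne x hx y hy; linarith

/-- Colored covers of `Y` give the asymptotic-dimension bound for the subtype `↥Y`. -/
lemma coloredCovers_asdimLE {X : Type*} [MetricSpace X] (Y : Set X) (n : ℕ)
    (h : ColoredCovers Y n) : AsdimLE ↥Y n := by
  intro r hr
  obtain ⟨D, hD, C, hcov, hbdd, hdis⟩ := h (2 * r) (by positivity)
  classical
  refine ⟨D, hD, {w | ∃ i, ∃ u ∈ C i, w = (Subtype.val : ↥Y → X) ⁻¹' u}, ?_, ?_, ?_⟩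
  · rw [eq_univ_iff_forall]
    intro x
    obtain ⟨i, u, hu, hmem⟩ := hcov x.val x.2
    exact ⟨Subtype.val ⁻¹' u, ⟨i, u, hu, rfl⟩, hmem⟩
  · rintro w ⟨i, u, hu, rfl⟩
    refine EMetric.diam_le ?_
    intro p hp q hq
    rw [edist_dist]
    refine ENNReal.ofReal_le_ofReal ?_
    rw [Subtype.dist_eq]
    exact hbdd i u hu p.val hp q.val hq
  · intro x
    set T := {w ∈ {w | ∃ i, ∃ u ∈ C i, w = (Subtype.val : ↥Y → X) ⁻¹' u} |
      (w ∩ Metric.ball x r).Nonempty} with hTdef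
    set f : Fin (n + 1) → Set (Set ↥Y) :=
      fun i => {w ∈ T | ∃ u ∈ C i, w = (Subtype.val : ↥Y → X) ⁻¹' u} with hfdef
    have hTsub : T ⊆ ⋃ i, f i := by
      rintro w ⟨⟨i, u, hu, rfl⟩, hne⟩
      exact Set.mem_iUnion.mpr ⟨i, ⟨⟨i, u, hu, rfl⟩, hne⟩, u, hu, rfl⟩
    have hfss : ∀ i, (f i).Subsingleton := by
      rintro i w ⟨⟨-, ⟨p, hpw, hpb⟩⟩, u, hu, rfl⟩ w' ⟨⟨-, ⟨q, hqw, hqb⟩⟩, u', hu', rfl⟩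
      by_cases huu : u = u'
      · rw [huu]
      · exfalso
        have h1 := hdis i u hu u' hu' huu p.val hpw q.val hqw
        have h2 : dist p q ≤ dist p x + dist x q := dist_triangle p x q
        have h3 : dist p x < r := mem_ball.mp hpb
        have h4 : dist x q < r := by rw [dist_comm]; exact mem_ball.mp hqb
        rw [← Subtype.dist_eq] at h1
        linarith
    have hTfin : T.Finite :=
      Set.Finite.subset (Set.finite_iUnion fun i => (hfss i).finite) hTsub
    refine ⟨hTfin, ?_⟩
    rcases Set.eq_empty_or_nonempty T with hTe | ⟨w₀, hw₀⟩
    · simp [hTe]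
    · set g : Fin (n + 1) → Set ↥Y :=
        fun i => if h : (f i).Nonempty then h.choose else w₀ with hgdef
      have hrange : T ⊆ Set.range g := by
        intro w hw
        obtain ⟨i, hwi⟩ := Set.mem_iUnion.mp (hTsub hw)
        have hne : (f i).Nonempty := ⟨w, hwi⟩
        refine ⟨i, ?_⟩
        rw [hgdef]
        simp only [dif_pos hne]
        exact hfss i hne.choose_spec hwi
      calc T.ncard ≤ (Set.range g).ncard :=
            Set.ncard_le_ncard hrange (Set.finite_range g)
        _ = (g '' univ).ncard := by rw [Set.image_univ]
        _ ≤ (univ : Set (Fin (n + 1))).ncard := Set.ncard_image_le Set.finite_univ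
        _ = n + 1 := by rw [Set.ncard_univ]; simp

theorem asdim_union {X : Type*} [MetricSpace X] (A B : Set X) (n : ℕ)
    (hA : AsdimLE ↥A n) (hB : AsdimLE ↥B n) :
    AsdimLE ↥(A ∪ B) n := by
  exact coloredCovers_asdimLE (A ∪ B) n
    (coloredCovers_union A B n (asdimLE_coloredCovers A n hA) (asdimLE_coloredCovers B n hB))
end

section
/- Let G be a group equipped with a proper left-invariant metric and let n ∈ ℕ. Then asdim(G) ≤ n if and only if every subgroup H ⊆ G that is generated by a compact subset of G satisfies asdim(H) ≤ n (where H carries the induced metric). -/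
open Metric Set

theorem asdim_subtype {G : Type*} [MetricSpace G] (p : G → Prop) (n : ℕ)
    (h : AsdimLE G n) : AsdimLE (Subtype p) n := by
  intro r hr
  obtain ⟨D, hD, U, hcov, hdiam, hball⟩ := h r hr
  have hiso : Isometry (Subtype.val : Subtype p → G) := Isometry.of_dist_eq fun _ _ => rfl
  refine ⟨D, hD, (fun u => Subtype.val ⁻¹' u) '' U, ?_, ?_, ?_⟩
  · ext x; simp only [mem_sUnion, mem_univ, iff_true]
    have : (x : G) ∈ ⋃₀ U := by rw [hcov]; trivial
    obtain ⟨u, hu, hxu⟩ := this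
    exact ⟨_, ⟨u, hu, rfl⟩, hxu⟩
  · rintro _ ⟨u, hu, rfl⟩
    refine le_trans (EMetric.diam_le fun a ha b hb => ?_) (hdiam u hu)
    have : edist a b = edist (a : G) (b : G) := (hiso.edist_eq a b).symm
    rw [this]
    exact EMetric.edist_le_diam_of_mem ha hb
  · intro x
    have hsub : {u ∈ (fun u => Subtype.val ⁻¹' u) '' U | (u ∩ Metric.ball x r).Nonempty} ⊆
        (fun u => Subtype.val ⁻¹' u) '' {u ∈ U | (u ∩ Metric.ball (x : G) r).Nonempty} := by
      rintro _ ⟨⟨u, hu, rfl⟩, ⟨y, hyu, hyb⟩⟩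
      refine ⟨u, ⟨hu, ⟨y, hyu, ?_⟩⟩, rfl⟩
      · simpa [Metric.mem_ball, Subtype.dist_eq] using hyb
    have hfin := (hball (x : G)).1
    have hfin' : ((fun u => (Subtype.val ⁻¹' u : Set (Subtype p))) '' {u ∈ U | (u ∩ Metric.ball (x : G) r).Nonempty}).Finite :=
      hfin.image _
    refine ⟨hfin'.subset hsub, ?_⟩
    calc _ ≤ ((fun u => (Subtype.val ⁻¹' u : Set (Subtype p))) '' {u ∈ U | (u ∩ Metric.ball (x : G) r).Nonempty}).ncard :=
          Set.ncard_le_ncard hsub hfin'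
      _ ≤ _ := Set.ncard_image_le hfin
      _ ≤ n + 1 := (hball (x : G)).2

theorem asdim_of_cg {G : Type*} [Group G] [MetricSpace G]
    (hinv : ∀ z x y : G, dist (z * x) (z * y) = dist x y)
    (hproper : ∀ (x : G) (R : ℝ), IsCompact (Metric.closedBall x R)) (n : ℕ)
    (h : ∀ H : Subgroup G, (∃ K : Set G, IsCompact K ∧ K ⊆ (H : Set G) ∧ Subgroup.closure K = H) →
        AsdimLE ↥H n) : AsdimLE G n := by
  intro r hr
  set K := Metric.closedBall (1:G) r with hK
  set H := Subgroup.closure K with hHdef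
  have hKH : K ⊆ (H : Set G) := Subgroup.subset_closure
  obtain ⟨D, hD, U, hcov, hdiam, hball⟩ := h H ⟨K, hproper 1 r, hKH, rfl⟩ r hr
  -- membership of quotients of near points
  have hmem : ∀ x y : G, dist x y < r → x⁻¹ * y ∈ H := by
    intro x y hxy
    apply hKH
    have h1 : dist (x⁻¹ * x) (x⁻¹ * y) = dist x y := hinv x⁻¹ x y
    rw [inv_mul_cancel] at h1
    rw [hK, Metric.mem_closedBall, dist_comm, h1]
    exact le_of_lt hxy
  have hrep : ∀ x : G, ((QuotientGroup.mk x : G ⧸ H).out)⁻¹ * x ∈ H := by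
    intro x
    have : (QuotientGroup.mk ((QuotientGroup.mk x : G ⧸ H).out) : G ⧸ H) = QuotientGroup.mk x :=
      Quotient.out_eq _
    exact (QuotientGroup.eq).1 this
  -- translation isometries
  have hisog : ∀ g : G, Isometry (fun h : ↥H => g * (h : G)) := by
    intro g
    apply Isometry.of_dist_eq
    intro a b
    rw [hinv]
    rfl
  classical
  refine ⟨D, hD, {s | ∃ (q : G ⧸ H) (u : Set ↥H), u ∈ U ∧
      s = (fun h : ↥H => q.out * (h : G)) '' u}, ?_, ?_, ?_⟩
  · ext x
    simp only [mem_sUnion, mem_univ, iff_true]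
    set q : G ⧸ H := QuotientGroup.mk x with hq
    have hx0 : (⟨q.out⁻¹ * x, hrep x⟩ : ↥H) ∈ ⋃₀ U := by rw [hcov]; trivial
    obtain ⟨u, hu, hxu⟩ := hx0
    refine ⟨_, ⟨q, u, hu, rfl⟩, ⟨⟨q.out⁻¹ * x, hrep x⟩, hxu, ?_⟩⟩
    simp [mul_inv_cancel_left]
  · rintro _ ⟨q, u, hu, rfl⟩
    rw [show EMetric.diam ((fun h : ↥H => q.out * (h : G)) '' u) = Metric.ediam _ from rfl,
      (hisog q.out).ediam_image]
    exact hdiam u hu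
  · intro x
    set q : G ⧸ H := QuotientGroup.mk x with hq
    set g : G := q.out with hg
    set h₀ : ↥H := ⟨g⁻¹ * x, hrep x⟩ with hh₀
    set F : Set ↥H → Set G := fun u => (fun h : ↥H => g * (h : G)) '' u with hF
    have hsub : {s ∈ {s | ∃ (q : G ⧸ H) (u : Set ↥H), u ∈ U ∧
          s = (fun h : ↥H => q.out * (h : G)) '' u} | (s ∩ Metric.ball x r).Nonempty} ⊆
        F '' {u ∈ U | (u ∩ Metric.ball h₀ r).Nonempty} := by
      rintro _ ⟨⟨q', u, hu, rfl⟩, ⟨z, ⟨hh, hhu, rfl⟩, hzb⟩⟩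
      have hqq : q' = q := by
        have h1 : (QuotientGroup.mk (q'.out * (hh : G)) : G ⧸ H) = QuotientGroup.mk q'.out := by
          rw [QuotientGroup.eq]
          simpa using hh.2
        have h2 : (QuotientGroup.mk x : G ⧸ H) = QuotientGroup.mk (q'.out * (hh : G)) := by
          rw [QuotientGroup.eq]
          exact hmem _ _ (Metric.mem_ball'.1 hzb)
        rw [hq, h2, h1]
        exact (QuotientGroup.out_eq' q').symm
      subst hqq
      refine ⟨u, ⟨hu, ⟨hh, hhu, ?_⟩⟩, rfl⟩
      rw [Metric.mem_ball, Subtype.dist_eq]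
      show dist (hh : G) (g⁻¹ * x) < r
      have : dist (g * (hh : G)) (g * (g⁻¹ * x)) = dist (hh : G) (g⁻¹ * x) := hinv g _ _
      rw [← this, mul_inv_cancel_left]
      exact hzb
    have hfin := (hball h₀).1
    have hfin' : (F '' {u ∈ U | (u ∩ Metric.ball h₀ r).Nonempty}).Finite := hfin.image F
    refine ⟨hfin'.subset hsub, ?_⟩
    calc _ ≤ (F '' {u ∈ U | (u ∩ Metric.ball h₀ r).Nonempty}).ncard :=
          Set.ncard_le_ncard hsub hfin'
      _ ≤ _ := Set.ncard_image_le hfin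
      _ ≤ n + 1 := (hball h₀).2

theorem asdim_group_iff_compactly_generated_subgroups (G : Type*) [Group G] [MetricSpace G]
    (hinv : ∀ z x y : G, dist (z * x) (z * y) = dist x y)
    (hproper : ∀ (x : G) (R : ℝ), IsCompact (Metric.closedBall x R)) (n : ℕ) :
    AsdimLE G n ↔
      ∀ H : Subgroup G, (∃ K : Set G, IsCompact K ∧ K ⊆ (H : Set G) ∧ Subgroup.closure K = H) →
        AsdimLE ↥H n := by
  constructor
  · intro hG H _hH
    exact asdim_subtype (fun x => x ∈ H) n hG
  · exact asdim_of_cg hinv hproper n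
end

section
/- Let X be a metric space, A ⊆ X, and r > 0. Then A is small in X if and only if the r-neighborhood B(A,r) = ⋃_{a∈A} B(a,r) is small in X. -/
open Metric Set

theorem small_iff_neighborhood_small {X : Type*} [MetricSpace X] (A : Set X) (r : ℝ)
    (hr : 0 < r) :
    IsSmall A ↔ IsSmall (⋃ a ∈ A, Metric.ball a r) := by
  set N : Set X := ⋃ a ∈ A, Metric.ball a r with hN
  constructor
  · intro hA L hL
    obtain ⟨s, hs, hLs⟩ := hL
    have hL' : IsLarge ((L \ N) ∪ A) := by
      refine ⟨s + r, by linarith, fun x => ?_⟩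
      obtain ⟨y, hyL, hxy⟩ := hLs x
      by_cases hy : y ∈ N
      · obtain ⟨a, haA, hya⟩ : ∃ a ∈ A, y ∈ Metric.ball a r := by
          simpa [hN] using hy
        refine ⟨a, Or.inr haA, ?_⟩
        have := Metric.mem_ball.mp hya
        calc dist x a ≤ dist x y + dist y a := dist_triangle _ _ _
          _ < s + r := by linarith
      · exact ⟨y, Or.inl ⟨hyL, hy⟩, by linarith⟩
    obtain ⟨t, ht, hLt⟩ := hA _ hL'
    refine ⟨t, ht, fun x => ?_⟩
    obtain ⟨y, ⟨hy1, hy2⟩, hxy⟩ := hLt x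
    rcases hy1 with h | h
    · exact ⟨y, h, hxy⟩
    · exact absurd h hy2
  · intro hNs L hL
    obtain ⟨t, ht, hLt⟩ := hNs L hL
    refine ⟨t, ht, fun x => ?_⟩
    obtain ⟨y, ⟨hyL, hyN⟩, hxy⟩ := hLt x
    refine ⟨y, ⟨hyL, fun hyA => hyN ?_⟩, hxy⟩
    exact Set.mem_biUnion hyA (Metric.mem_ball_self hr)
end

section
/- Let f : X → Y be a coarse equivalence between metric spaces. Then a subset A ⊆ X is small in X if and only if its image f(A) is small in Y. -/
open Metric Set

/-- A set is small iff for every `t > 0` the set of points at distance at least `t`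
from `A` is large. -/
lemma small_char {X : Type*} [MetricSpace X] (A : Set X) :
    IsSmall A ↔ ∀ t > (0 : ℝ), IsLarge {x | ∀ a ∈ A, t ≤ dist x a} := by
  constructor
  · intro hA t ht
    have hL : IsLarge (A ∪ {x | ∀ a ∈ A, t ≤ dist x a}) := by
      refine ⟨t, ht, fun x => ?_⟩
      by_cases hx : ∀ a ∈ A, t ≤ dist x a
      · exact ⟨x, Or.inr hx, by simpa using ht⟩
      · push_neg at hx
        obtain ⟨a, ha, hat⟩ := hx
        exact ⟨a, Or.inl ha, hat⟩
    obtain ⟨ρ, hρ, hW⟩ := hA _ hL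
    refine ⟨ρ, hρ, fun x => ?_⟩
    obtain ⟨y, ⟨hy1, hy2⟩, hy3⟩ := hW x
    refine ⟨y, ?_, hy3⟩
    rcases hy1 with h | h
    · exact absurd h hy2
    · exact h
  · rintro h L ⟨r, hr, hL⟩
    obtain ⟨ρ, hρ, hW⟩ := h (r + 1) (by linarith)
    refine ⟨ρ + r, by linarith, fun x => ?_⟩
    obtain ⟨z, hz, hxz⟩ := hW x
    obtain ⟨l, hl, hzl⟩ := hL z
    refine ⟨l, ⟨hl, fun hlA => ?_⟩, ?_⟩
    · have := hz l hlA
      linarith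
    · calc dist x l ≤ dist x z + dist z l := dist_triangle _ _ _
        _ < ρ + r := by linarith

/-- If `A` is within bounded distance of a small set `B`, then `A` is small. -/
lemma small_of_near {X : Type*} [MetricSpace X] {A B : Set X} (hB : IsSmall B)
    (C : ℝ) (hC : 0 ≤ C) (h : ∀ a ∈ A, ∃ b ∈ B, dist a b ≤ C) : IsSmall A := by
  rw [small_char] at hB ⊢
  intro t ht
  obtain ⟨ρ, hρ, hW⟩ := hB (t + C) (by linarith)
  refine ⟨ρ, hρ, fun x => ?_⟩
  obtain ⟨z, hz, hxz⟩ := hW x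
  refine ⟨z, fun a ha => ?_, hxz⟩
  obtain ⟨b, hb, hab⟩ := h a ha
  have h1 : t + C ≤ dist z b := hz b hb
  have h2 : dist z b ≤ dist z a + dist a b := dist_triangle _ _ _
  linarith

/-- The image of a small set under a coarse equivalence is small. -/
lemma coarse_small_image {X Y : Type*} [MetricSpace X] [MetricSpace Y]
    (f : X → Y) (hf : IsCoarseEquiv f) (A : Set X) (hA : IsSmall A) :
    IsSmall (f '' A) := by
  obtain ⟨hfc, g, hgc, ⟨Cg, hCg⟩, ⟨Cf, hCf⟩⟩ := hf
  rw [small_char] at hA ⊢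
  intro t ht
  obtain ⟨St, hSt, hgS⟩ := hgc t ht
  set Cg' := max Cg 0 with hCg'def
  have hCg' : ∀ x, dist x (g (f x)) ≤ Cg' := fun x => (hCg x).trans (le_max_left _ _)
  have hCg'0 : 0 ≤ Cg' := le_max_right _ _
  obtain ⟨ρ, hρ, hW⟩ := hA (2 * Cg' + St + 1) (by linarith)
  obtain ⟨S', hS', hfS⟩ := hfc ρ hρ
  set Cf' := max Cf 0 with hCf'def
  have hCf' : ∀ y, dist y (f (g y)) ≤ Cf' := fun y => (hCf y).trans (le_max_left _ _)
  have hCf'0 : 0 ≤ Cf' := le_max_right _ _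
  refine ⟨Cf' + S' + 1, by linarith, fun y => ?_⟩
  obtain ⟨z, hz, hgz⟩ := hW (g y)
  refine ⟨f z, ?_, ?_⟩
  · rintro b ⟨a, ha, rfl⟩
    by_contra hlt
    push_neg at hlt
    have h1 : dist (g (f z)) (g (f a)) ≤ St := hgS _ _ hlt.le
    have h2 : dist z a ≤ dist z (g (f z)) + dist (g (f z)) (g (f a)) + dist (g (f a)) a :=
      dist_triangle4 _ _ _ _
    have h3 : dist z (g (f z)) ≤ Cg' := hCg' z
    have h4 : dist (g (f a)) a ≤ Cg' := by rw [dist_comm]; exact hCg' a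
    have h5 : 2 * Cg' + St + 1 ≤ dist z a := hz a ha
    linarith
  · calc dist y (f z) ≤ dist y (f (g y)) + dist (f (g y)) (f z) := dist_triangle _ _ _
      _ ≤ Cf' + S' := add_le_add (hCf' y) (hfS _ _ hgz.le)
      _ < Cf' + S' + 1 := by linarith

theorem small_iff_image_small {X Y : Type*} [MetricSpace X] [MetricSpace Y]
    (f : X → Y) (hf : IsCoarseEquiv f) (A : Set X) :
    IsSmall A ↔ IsSmall (f '' A) := by
  obtain ⟨hfc, g, hgc, ⟨Cg, hCg⟩, ⟨Cf, hCf⟩⟩ := hf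
  have hf' : IsCoarseEquiv f := ⟨hfc, g, hgc, ⟨Cg, hCg⟩, ⟨Cf, hCf⟩⟩
  have hg' : IsCoarseEquiv g := ⟨hgc, f, hfc, ⟨Cf, hCf⟩, ⟨Cg, hCg⟩⟩
  constructor
  · exact coarse_small_image f hf' A
  · intro h
    have h2 : IsSmall (g '' (f '' A)) := coarse_small_image g hg' _ h
    refine small_of_near h2 (max Cg 0) (le_max_right _ _) fun a ha => ?_
    exact ⟨g (f a), ⟨f a, ⟨a, ha, rfl⟩, rfl⟩, (hCg a).trans (le_max_left _ _)⟩
end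

section
/- Let X be a metric space and let A ⊆ X be a subset that is not small. Then there exists r > 0 such that the set X \ B(A,r) is not large, where B(A,r) = ⋃_{a∈A} B(a,r) is the open r-neighborhood of A. -/
open Metric Set

theorem not_small_complement_neighborhood_not_large {X : Type*} [MetricSpace X]
    (A : Set X) (hA : ¬ IsSmall A) :
    ∃ r > (0 : ℝ), ¬ IsLarge ((⋃ a ∈ A, Metric.ball a r)ᶜ) := by
  by_contra h
  push_neg at h
  apply hA
  intro L hL
  obtain ⟨s, hs, hLs⟩ := hL
  obtain ⟨t, ht, hts⟩ := h (s + 1) (by linarith)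
  refine ⟨t + s, by linarith, fun x => ?_⟩
  obtain ⟨z, hz, hxz⟩ := hts x
  obtain ⟨y, hy, hzy⟩ := hLs z
  refine ⟨y, ⟨hy, fun hyA => ?_⟩, ?_⟩
  · simp only [mem_compl_iff, mem_iUnion, mem_ball] at hz
    exact hz ⟨y, hyA, by linarith⟩
  · calc dist x y ≤ dist x z + dist z y := dist_triangle _ _ _
      _ < t + s := by linarith
end

section
/- Let G be a group equipped with a proper left-invariant metric and let A ⊆ G be a subset that is not small. Then for every n ∈ ℕ, asdim(A) ≤ n if and only if asdim(G) ≤ n (i.e. A has the same asymptotic dimension as G). -/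
open Metric Set

private lemma card_aux {α : Type*} {S : Set α} {m : ℕ}
    (h : ∀ t : Finset α, ↑t ⊆ S → t.card ≤ m) : S.Finite ∧ S.ncard ≤ m := by
  have hfin : S.Finite := by
    by_contra hinf
    obtain ⟨t, hts, htc⟩ := Set.Infinite.exists_subset_card_eq hinf (m + 1)
    have := h t hts
    omega
  refine ⟨hfin, ?_⟩
  rw [Set.ncard_eq_toFinset_card _ hfin]
  exact h hfin.toFinset (by simp)

theorem asdim_eq_of_not_small (G : Type*) [Group G] [MetricSpace G]
    (hinv : ∀ z x y : G, dist (z * x) (z * y) = dist x y)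
    (hproper : ∀ (x : G) (R : ℝ), IsCompact (Metric.closedBall x R))
    (A : Set G) (hA : ¬ IsSmall A) (n : ℕ) :
    AsdimLE ↥A n ↔ AsdimLE G n := by
  constructor
  · -- hard direction: asdim A ≤ n → asdim G ≤ n
    intro hAa r hr
    classical
    simp only [IsSmall, IsLarge] at hA
    push_neg at hA
    obtain ⟨L, ⟨r0, hr0, hLlarge⟩, hnot⟩ := hA
    -- key: translated dense pieces of A in arbitrarily large balls
    have key : ∀ k : ℕ, ∃ x : G, ∀ g : G, dist g 1 ≤ (k : ℝ) →
        ∃ a ∈ A, dist (x * g) a < r0 := by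
      intro k
      obtain ⟨x, hx⟩ := hnot ((k : ℝ) + r0 + 1) (by positivity)
      refine ⟨x, fun g hg => ?_⟩
      obtain ⟨y, hyL, hy⟩ := hLlarge (x * g)
      have hxg : dist x (x * g) = dist g 1 := by
        have := hinv x 1 g
        rw [mul_one] at this
        rw [this, dist_comm]
      have hxy : dist x y < (k : ℝ) + r0 + 1 := by
        calc dist x y ≤ dist x (x * g) + dist (x * g) y := dist_triangle _ _ _
          _ < (k : ℝ) + r0 + 1 := by rw [hxg]; linarith
      have hyA : y ∈ A := by
        by_contra hyA
        exact absurd hxy (not_lt.mpr (hx y ⟨hyL, hyA⟩))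
      exact ⟨y, hyA, hy⟩
    choose xk hxk using key
    have hAne : A.Nonempty := by
      obtain ⟨a, ha, -⟩ := hxk 0 1 (by simp)
      exact ⟨a, ha⟩
    have key2 : ∀ (k : ℕ) (g : G), ∃ a, a ∈ A ∧
        (dist g 1 ≤ (k : ℝ) → dist (xk k * g) a < r0) := by
      intro k g
      by_cases h : dist g 1 ≤ (k : ℝ)
      · obtain ⟨a, ha, hd⟩ := hxk k g h
        exact ⟨a, ha, fun _ => hd⟩
      · exact ⟨hAne.choose, hAne.choose_spec, fun hg => absurd hg h⟩
    choose φ hφA hφd using key2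
    obtain ⟨D, hD, U, hcov, hdiam, hmult⟩ := hAa (2 * r + 2 * r0 + 1) (by positivity)
    have hex : ∀ a : ↥A, ∃ u, u ∈ U ∧ a ∈ u := by
      intro a
      have : a ∈ ⋃₀ U := by rw [hcov]; trivial
      obtain ⟨u, hu, hau⟩ := this
      exact ⟨u, hu, hau⟩
    choose c hcU hcmem using hex
    set 𝒰 : Ultrafilter ℕ := Filter.hyperfilter ℕ with h𝒰
    set cc : ℕ → G → Set ↥A := fun k g => c ⟨φ k g, hφA k g⟩ with hccdef
    set V : G → Set G := fun g => {h | {k | cc k g = cc k h} ∈ 𝒰} with hVdef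
    have hmemV : ∀ g h : G, h ∈ V g ↔ {k | cc k g = cc k h} ∈ 𝒰 := by
      intro g h; rw [hVdef]; rfl
    have hrefl : ∀ g, g ∈ V g := by
      intro g
      rw [hmemV]
      have : {k : ℕ | cc k g = cc k g} = Set.univ := by ext; simp
      rw [this]
      exact Filter.univ_mem
    have hsymm : ∀ {g h}, h ∈ V g → g ∈ V h := by
      intro g h hgh
      rw [hmemV] at hgh ⊢
      exact Filter.mem_of_superset hgh fun k hk => hk.symm
    have htrans : ∀ {g h h'}, h ∈ V g → h' ∈ V h → h' ∈ V g := by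
      intro g h h' h1 h2
      rw [hmemV] at h1 h2 ⊢
      exact Filter.mem_of_superset (Filter.inter_mem h1 h2) fun k hk => hk.1.trans hk.2
    have hVeq : ∀ {g h}, h ∈ V g → V g = V h := by
      intro g h hgh
      ext h'
      exact ⟨fun h1 => htrans (hsymm hgh) h1, fun h1 => htrans hgh h1⟩
    have hT : ∀ B : ℝ, {k : ℕ | B ≤ (k : ℝ)} ∈ 𝒰 := by
      intro B
      have hcof : {k : ℕ | B ≤ (k : ℝ)} ∈ (Filter.cofinite : Filter ℕ) := by
        rw [Nat.cofinite_eq_atTop]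
        obtain ⟨N, hN⟩ := exists_nat_ge B
        exact Filter.mem_of_superset (Filter.mem_atTop N)
          fun k hk => le_trans hN (by exact_mod_cast hk)
      exact Filter.hyperfilter_le_cofinite hcof
    refine ⟨D + 2 * r0, by positivity, Set.range V, ?_, ?_, ?_⟩
    · ext g
      simp only [Set.mem_univ, iff_true, Set.mem_sUnion]
      exact ⟨V g, ⟨g, rfl⟩, hrefl g⟩
    · rintro _ ⟨g, rfl⟩
      refine EMetric.diam_le fun h1 h1m h2 h2m => ?_
      have hmem : {k : ℕ | cc k h1 = cc k h2} ∩
          {k : ℕ | max (dist h1 1) (dist h2 1) ≤ (k : ℝ)} ∈ 𝒰 := by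
        refine Filter.inter_mem ?_ (hT _)
        exact (hmemV _ _).mp (htrans (hsymm h1m) h2m)
      obtain ⟨k, hk1, hk2⟩ := Filter.nonempty_of_mem hmem
      simp only [Set.mem_setOf_eq] at hk1 hk2
      have hd1 := hφd k h1 (le_trans (le_max_left _ _) hk2)
      have hd2 := hφd k h2 (le_trans (le_max_right _ _) hk2)
      set a1 : ↥A := ⟨φ k h1, hφA k h1⟩ with ha1
      set a2 : ↥A := ⟨φ k h2, hφA k h2⟩ with ha2
      have hcc1 : cc k h1 = c a1 := by rw [hccdef]
      have hcc2 : cc k h2 = c a2 := by rw [hccdef]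
      have hdab : dist a1 a2 ≤ D := by
        have h1u : a1 ∈ c a1 := hcmem a1
        have h2u : a2 ∈ c a1 := by
          rw [show c a1 = c a2 by rw [← hcc1, ← hcc2, hk1]]
          exact hcmem a2
        have hle := le_trans (EMetric.edist_le_diam_of_mem h1u h2u) (hdiam _ (hcU a1))
        rw [edist_dist] at hle
        exact (ENNReal.ofReal_le_ofReal_iff hD.le).mp hle
      have hdist : dist h1 h2 ≤ D + 2 * r0 := by
        have e1 : dist h1 h2 = dist (xk k * h1) (xk k * h2) := (hinv (xk k) h1 h2).symm
        have hsub : dist (φ k h1) (φ k h2) ≤ D := by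
          rw [Subtype.dist_eq] at hdab; exact hdab
        rw [e1]
        calc dist (xk k * h1) (xk k * h2)
            ≤ dist (xk k * h1) (φ k h1) + dist (φ k h1) (φ k h2) +
              dist (φ k h2) (xk k * h2) := dist_triangle4 _ _ _ _
          _ ≤ r0 + D + r0 := by
              have hcm : dist (φ k h2) (xk k * h2) = dist (xk k * h2) (φ k h2) := dist_comm _ _
              have hcm1 : dist (xk k * h1) (φ k h1) = dist (φ k h1) (xk k * h1) := dist_comm _ _
              linarith
          _ = D + 2 * r0 := by ring
      rw [edist_dist]
      exact ENNReal.ofReal_le_ofReal hdist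
    · intro x
      apply card_aux
      intro t ht
      rcases t.eq_empty_or_nonempty with rfl | ⟨W0, hW0⟩
      · simp
      have hrepne : ∀ W ∈ t, (W ∩ Metric.ball x r).Nonempty := fun W hW => (ht hW).2
      set rep : Set G → G := fun W =>
        if h : (W ∩ Metric.ball x r).Nonempty then h.choose else 1 with hrepdef
      have hrepmem : ∀ W ∈ t, rep W ∈ W ∩ Metric.ball x r := by
        intro W hW
        rw [hrepdef]
        simp only [dif_pos (hrepne W hW)]
        exact (hrepne W hW).choose_spec
      have hVrep : ∀ W ∈ t, V (rep W) = W := by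
        intro W hW
        obtain ⟨g, hg⟩ := (ht hW).1
        have hmem : rep W ∈ V g := by rw [hg]; exact (hrepmem W hW).1
        exact (hVeq hmem).symm.trans hg
      set B : ℝ := r + dist x 1 with hBdef
      have hsets : (⋂ p : ({W // W ∈ t} × {W // W ∈ t}),
          (if p.1.1 = p.2.1 then (Set.univ : Set ℕ)
            else {k | cc k (rep p.1.1) ≠ cc k (rep p.2.1)}))
          ∩ {k : ℕ | B ≤ (k : ℝ)} ∈ 𝒰 := by
        refine Filter.inter_mem ?_ (hT B)
        rw [Filter.iInter_mem]
        rintro ⟨⟨W1, hW1⟩, ⟨W2, hW2⟩⟩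
        split_ifs with hWeq
        · exact Filter.univ_mem
        · have hne : rep W2 ∉ V (rep W1) := by
            intro hmem
            exact hWeq ((hVrep W1 hW1).symm.trans ((hVeq hmem).trans (hVrep W2 hW2)))
          have hnmem : {k : ℕ | cc k (rep W1) = cc k (rep W2)} ∉ 𝒰 :=
            fun hmem => hne ((hmemV _ _).mpr hmem)
          have := Ultrafilter.compl_mem_iff_notMem.mpr hnmem
          rwa [Set.compl_setOf] at this
      obtain ⟨k, hkI, hkB⟩ := Filter.nonempty_of_mem hsets
      simp only [Set.mem_setOf_eq] at hkB
      have hkI' : ∀ (W1 : Set G), W1 ∈ t → ∀ (W2 : Set G), W2 ∈ t → W1 ≠ W2 →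
          cc k (rep W1) ≠ cc k (rep W2) := by
        intro W1 h1 W2 h2 hne
        have := Set.mem_iInter.mp hkI (⟨W1, h1⟩, ⟨W2, h2⟩)
        rwa [if_neg hne] at this
      have hdom : ∀ W ∈ t, dist (rep W) 1 ≤ (k : ℝ) := by
        intro W hW
        have hb : dist (rep W) x < r := Metric.mem_ball.mp (hrepmem W hW).2
        calc dist (rep W) 1 ≤ dist (rep W) x + dist x 1 := dist_triangle _ _ _
          _ ≤ r + dist x 1 := by linarith
          _ ≤ (k : ℝ) := hkB
      set a0 : ↥A := ⟨φ k (rep W0), hφA k (rep W0)⟩ with ha0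
      obtain ⟨hMfin, hMcard⟩ := hmult a0
      have hinj : t.card ≤ hMfin.toFinset.card := by
        apply Finset.card_le_card_of_injOn (fun W => cc k (rep W))
        · intro W hW
          rw [Finset.mem_coe, Set.Finite.mem_toFinset]
          refine ⟨by rw [hccdef]; exact hcU _, ⟨⟨φ k (rep W), hφA k (rep W)⟩, ?_, ?_⟩⟩
          · rw [hccdef]; exact hcmem _
          · rw [Metric.mem_ball, Subtype.dist_eq]
            have hd1 := hφd k (rep W) (hdom W hW)
            have hd0 := hφd k (rep W0) (hdom W0 hW0)
            have hmid : dist (xk k * rep W) (xk k * rep W0) = dist (rep W) (rep W0) :=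
              hinv _ _ _
            have hWW0 : dist (rep W) (rep W0) < 2 * r := by
              have b1 : dist (rep W) x < r := Metric.mem_ball.mp (hrepmem W hW).2
              have b2 : dist (rep W0) x < r := Metric.mem_ball.mp (hrepmem W0 hW0).2
              calc dist (rep W) (rep W0)
                  ≤ dist (rep W) x + dist x (rep W0) := dist_triangle _ _ _
                _ < r + r := by rw [dist_comm x]; linarith
                _ = 2 * r := by ring
            have hc1 : dist (φ k (rep W)) (xk k * rep W) = dist (xk k * rep W) (φ k (rep W)) :=
              dist_comm _ _
            calc dist (φ k (rep W)) ((a0 : G))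
                ≤ dist (φ k (rep W)) (xk k * rep W) + dist (xk k * rep W) (xk k * rep W0) +
                  dist (xk k * rep W0) (φ k (rep W0)) := dist_triangle4 _ _ _ _
              _ < r0 + 2 * r + r0 := by
                  rw [hc1, hmid]
                  have hd0' : dist (xk k * rep W0) ((a0 : G)) < r0 := hd0
                  linarith
              _ ≤ 2 * r + 2 * r0 + 1 := by linarith
        · intro W1 h1 W2 h2 heq
          by_contra hne
          exact hkI' W1 (Finset.mem_coe.mp h1) W2 (Finset.mem_coe.mp h2) hne heq
      calc t.card ≤ hMfin.toFinset.card := hinj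
        _ = {u | u ∈ U ∧ (u ∩ Metric.ball a0 (2 * r + 2 * r0 + 1)).Nonempty}.ncard :=
            (Set.ncard_eq_toFinset_card _ hMfin).symm
        _ ≤ n + 1 := hMcard
  · -- easy direction: asdim G ≤ n → asdim A ≤ n
    intro hG r hr
    obtain ⟨D, hD, U, hcov, hdiam, hmult⟩ := hG r hr
    refine ⟨D, hD, (fun u => (Subtype.val ⁻¹' u : Set ↥A)) '' U, ?_, ?_, ?_⟩
    · ext a
      simp only [Set.mem_univ, iff_true, Set.mem_sUnion]
      have : (a : G) ∈ ⋃₀ U := by rw [hcov]; trivial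
      obtain ⟨u, hu, hau⟩ := this
      exact ⟨_, ⟨u, hu, rfl⟩, hau⟩
    · rintro _ ⟨u, hu, rfl⟩
      refine EMetric.diam_le fun a ha b hb => ?_
      calc edist a b = edist (a : G) (b : G) := Subtype.edist_eq a b
        _ ≤ EMetric.diam u := EMetric.edist_le_diam_of_mem ha hb
        _ ≤ ENNReal.ofReal D := hdiam u hu
    · intro a
      obtain ⟨hfin, hcard⟩ := hmult (a : G)
      have hsub : {u' ∈ (fun u => (Subtype.val ⁻¹' u : Set ↥A)) '' U |
            (u' ∩ Metric.ball a r).Nonempty}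
          ⊆ (fun u => (Subtype.val ⁻¹' u : Set ↥A)) ''
            {u ∈ U | (u ∩ Metric.ball (a : G) r).Nonempty} := by
        rintro u' ⟨⟨u, hu, rfl⟩, b, hbu, hbb⟩
        refine ⟨u, ⟨hu, ⟨b, hbu, ?_⟩⟩, rfl⟩
        rw [Metric.mem_ball]
        rw [Metric.mem_ball, Subtype.dist_eq] at hbb
        exact hbb
      refine ⟨(hfin.image _).subset hsub,
        le_trans (Set.ncard_le_ncard hsub (hfin.image _)) ?_⟩
      exact le_trans (Set.ncard_image_le hfin) hcard
end

section
/- Let n ≥ 1, let Δ = {x ∈ Fin (n+1) → ℝ : x(i) ≥ 0 for all i and Σ_i x(i) = 1} be the standard n-dimensional simplex in ℝ^{n+1} with the sup-norm, let b = (1/(n+1),…,1/(n+1)) be its barycenter, and for each i let St'(i) = {x ∈ Δ : x(i) = max_j x(j)} be the barycentric star of the i-th vertex. Then for every ε > 0, every point x ∈ Fin (n+1) → ℝ with Σ_i x(i) = 1 satisfying: for each i ≤ n there exists y ∈ St'(i) with ‖x − y‖_∞ < ε, satisfies ‖x − b‖_∞ < n·ε. -/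
open Finset

theorem near_barycentric_stars_near_barycenter (n : ℕ) (hn : 1 ≤ n) (ε : ℝ) (hε : 0 < ε)
    (x : Fin (n + 1) → ℝ) (hx : ∑ i, x i = 1)
    (h : ∀ i : Fin (n + 1), ∃ y : Fin (n + 1) → ℝ,
      (∀ j, 0 ≤ y j) ∧ (∑ j, y j = 1) ∧ (∀ j, y j ≤ y i) ∧ ‖x - y‖ < ε) :
    ‖x - (fun _ => 1 / (n + 1 : ℝ))‖ < n * ε := by
  have hn1 : (1:ℝ) ≤ n := by exact_mod_cast hn
  have hpos : (0:ℝ) < n + 1 := by positivity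
  have key : ∀ i : Fin (n+1), 1/(n+1:ℝ) - ε < x i := by
    intro i
    obtain ⟨y, hy0, hy1, hyi, hxy⟩ := h i
    have h1 : (1:ℝ) ≤ (n+1) * y i := by
      calc (1:ℝ) = ∑ j, y j := hy1.symm
        _ ≤ ∑ _j : Fin (n+1), y i := Finset.sum_le_sum (fun j _ => hyi j)
        _ = (n+1) * y i := by
            rw [Finset.sum_const, Finset.card_univ, Fintype.card_fin]
            push_cast; ring
    have hb : 1/(n+1:ℝ) ≤ y i := by
      rw [div_le_iff₀ hpos]; linarith
    have h2 : |x i - y i| < ε :=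
      lt_of_le_of_lt (by simpa using norm_le_pi_norm (x - y) i) hxy
    have := abs_lt.mp h2
    linarith
  rw [pi_norm_lt_iff (by positivity)]
  intro i
  rw [Pi.sub_apply, Real.norm_eq_abs, abs_lt]
  have hsum : ∑ j, (x j - 1/(n+1:ℝ)) = 0 := by
    rw [Finset.sum_sub_distrib, hx, Finset.sum_const, Finset.card_univ, Fintype.card_fin]
    rw [nsmul_eq_mul]; push_cast
    field_simp
    norm_num
  have hcard : (univ.erase i).card = n := by
    rw [Finset.card_erase_of_mem (Finset.mem_univ i), Finset.card_univ, Fintype.card_fin]; omega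
  have hne : (univ.erase i).Nonempty := by
    rw [← Finset.card_pos, hcard]; exact hn
  have h3 : ∑ j ∈ univ.erase i, (x j - 1/(n+1:ℝ)) = -(x i - 1/(n+1:ℝ)) := by
    have := Finset.sum_erase_add univ (fun j => x j - 1/(n+1:ℝ)) (Finset.mem_univ i)
    rw [hsum] at this
    linarith
  have h4 : (n:ℝ) * (-ε) < ∑ j ∈ univ.erase i, (x j - 1/(n+1:ℝ)) := by
    have := Finset.sum_lt_sum_of_nonempty hne
      (f := fun _ => -ε) (g := fun j => x j - 1/(n+1:ℝ))
      (fun j _ => by have := key j; linarith)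
    rwa [Finset.sum_const, hcard, nsmul_eq_mul] at this
  constructor
  · have := key i; nlinarith
  · linarith [h4, h3]
end
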